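/- arXiv:1211.1498 — 2 statements merged into one kernel-verified Lean document; each statement's English description precedes it below -/
import Mathlib

section
/- For every K > 0 there exist constants 0 < c ≤ C depending only on K such that for every real p with 1 ≤ p < ∞, every strictly increasing sequence λ : ℤ → ℝ with λ_n → ±∞ as n → ±∞ and λ_{n+1} − λ_n ≤ K for all n, and every f : ℤ → ℂ, the trace norm ‖f‖_{W^2_p|Λ} satisfies c·N(f) ≤ ‖f‖_{W^2_p|Λ} ≤ C·N(f), where N(f)^p := ∑_{n∈ℤ} (λ_{n+2} − λ_n)|f[λ_n,λ_{n+1},λ_{n+2}]|^p + ∑_{n∈ℤ} (λ_{n+2} − λ_n)|f_n|^p + ∑_{n∈ℤ} (λ_{n+2} − λ_n)^{p+1}|f[λ_n,λ_{n+1}]|^p, both sides interpreted in [0,∞]. -/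
open MeasureTheory
open scoped ENNReal NNReal

/-- `lam` is a strictly increasing sequence tending to `-∞` at `-∞` and `+∞` at `+∞`. -/
def GoodSeq (lam : ℤ → ℝ) : Prop :=
  StrictMono lam ∧ Filter.Tendsto lam Filter.atBot Filter.atBot ∧
    Filter.Tendsto lam Filter.atTop Filter.atTop

/-- `F` is an admissible `r`-extension of `f : ℤ → ℂ`, with associated `r`-th derivative `G`:
`F` is `(r-1)` times continuously differentiable, `G` is locally integrable,
`F^{(r-1)}(b) - F^{(r-1)}(a) = ∫_a^b G` for all `a ≤ b`, and `F (lam n) = f n` for all `n`. -/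
def AdmissibleExt (r : ℕ) (lam : ℤ → ℝ) (f : ℤ → ℂ) (F G : ℝ → ℂ) : Prop :=
  ContDiff ℝ (r - 1 : ℕ) F ∧ MeasureTheory.LocallyIntegrable G volume ∧
  (∀ a b : ℝ, a ≤ b →
      iteratedDeriv (r - 1) F b - iteratedDeriv (r - 1) F a = ∫ t in a..b, G t) ∧
  (∀ n : ℤ, F (lam n) = f n)

/-- Homogeneous trace seminorm `‖f‖_{L^r_p|Λ}`, valued in `[0,∞]`. -/
noncomputable def traceL (r : ℕ) (p : ℝ) (lam : ℤ → ℝ) (f : ℤ → ℂ) : ℝ≥0∞ :=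
  ⨅ (F : ℝ → ℂ) (G : ℝ → ℂ) (_ : AdmissibleExt r lam f F G),
    (∫⁻ t, ENNReal.ofReal (‖G t‖ ^ p)) ^ (1 / p)

/-- Trace norm `‖f‖_{W^r_p|Λ}`, valued in `[0,∞]`. -/
noncomputable def traceW (r : ℕ) (p : ℝ) (lam : ℤ → ℝ) (f : ℤ → ℂ) : ℝ≥0∞ :=
  ⨅ (F : ℝ → ℂ) (G : ℝ → ℂ) (_ : AdmissibleExt r lam f F G),
    ((∫⁻ t, ENNReal.ofReal (‖F t‖ ^ p)) +
      (∫⁻ t, ENNReal.ofReal (‖G t‖ ^ p))) ^ (1 / p)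

/-- First order divided difference `f[λ_n, λ_{n+1}]`. -/
noncomputable def dd1 (lam : ℤ → ℝ) (f : ℤ → ℂ) (n : ℤ) : ℂ :=
  (f (n + 1) - f n) / ((lam (n + 1) - lam n : ℝ) : ℂ)

/-- Second order divided difference `f[λ_n, λ_{n+1}, λ_{n+2}]`. -/
noncomputable def dd2 (lam : ℤ → ℝ) (f : ℤ → ℂ) (n : ℤ) : ℂ :=
  (dd1 lam f (n + 1) - dd1 lam f n) / ((lam (n + 2) - lam n : ℝ) : ℂ)

/-- Divided difference `f[λ_n, …, λ_{n+k}]` of order `k`. -/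
noncomputable def ddiv (lam : ℤ → ℝ) (f : ℤ → ℂ) (n : ℤ) (k : ℕ) : ℂ :=
  ∑ i ∈ Finset.range (k + 1),
    f (n + (i : ℤ)) /
      ∏ j ∈ (Finset.range (k + 1)).erase i,
        ((lam (n + (i : ℤ)) - lam (n + (j : ℤ)) : ℝ) : ℂ)

/-- Divided difference of values `v` at (distinct) points `x`. -/
noncomputable def ddPts {m : ℕ} (x : Fin m → ℝ) (v : Fin m → ℂ) : ℂ :=
  ∑ i, v i / ∏ j ∈ Finset.univ.erase i, ((x i - x j : ℝ) : ℂ)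

/-- `F` is of class `W^r` on `[a,b]` with `r`-th derivative `G`. -/
def ClassW (r : ℕ) (a b : ℝ) (F G : ℝ → ℂ) : Prop :=
  ContDiffOn ℝ (r - 1 : ℕ) F (Set.Icc a b) ∧ MeasureTheory.IntegrableOn G (Set.Icc a b) ∧
  ∀ x y : ℝ, a ≤ x → x ≤ y → y ≤ b →
    iteratedDerivWithin (r - 1) F (Set.Icc a b) y -
      iteratedDerivWithin (r - 1) F (Set.Icc a b) x = ∫ t in x..y, G t

/-- `‖f‖_{eq,L}^p`, valued in `[0,∞]`. -/
noncomputable def eqLp (r : ℕ) (p : ℝ) (lam : ℤ → ℝ) (f : ℤ → ℂ) : ℝ≥0∞ :=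
  ∑' n : ℤ, ENNReal.ofReal ((lam (n + (r : ℤ)) - lam n) * ‖ddiv lam f n r‖ ^ p)

/-- `‖f‖_{eq,W}^p`, valued in `[0,∞]`. -/
noncomputable def eqWp (r : ℕ) (p : ℝ) (lam : ℤ → ℝ) (f : ℤ → ℂ) : ℝ≥0∞ :=
  eqLp r p lam f +
    ∑ j ∈ Finset.range r, ∑' n : ℤ,
      ENNReal.ofReal ((lam (n + (r : ℤ)) - lam n) ^ ((j : ℝ) * p + 1) *
        ‖ddiv lam f n j‖ ^ p)

/-- The cubic `q(x) = 4(x² - x³)`. -/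
noncomputable def qcub : ℝ → ℝ := fun x => 4 * (x ^ 2 - x ^ 3)

/-- `α_n(f) = (h_n f[λ_{n-1},λ_n] + h_{n-1} f[λ_n,λ_{n+1}])/(h_{n-1}+h_n)`. -/
noncomputable def alphaN (lam : ℤ → ℝ) (f : ℤ → ℂ) (n : ℤ) : ℂ :=
  (((lam (n + 1) - lam n : ℝ) : ℂ) * dd1 lam f (n - 1) +
      ((lam n - lam (n - 1) : ℝ) : ℂ) * dd1 lam f n) /
    ((lam (n + 1) - lam (n - 1) : ℝ) : ℂ)

/-- The formula for `Φ₁ f` on `[λ_n, λ_{n+1}]`. -/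
noncomputable def phi1P (lam : ℤ → ℝ) (f : ℤ → ℂ) (n : ℤ) (x : ℝ) : ℂ :=
  f n * (((lam (n + 1) - x) / (lam (n + 1) - lam n) : ℝ) : ℂ) +
    f (n + 1) * (((x - lam n) / (lam (n + 1) - lam n) : ℝ) : ℂ)

/-- The formula for `Φ₂ f` on `[μ_{n-1}, λ_n]`. -/
noncomputable def phi2L (lam : ℤ → ℝ) (f : ℤ → ℂ) (n : ℤ) (x : ℝ) : ℂ :=
  f n + alphaN lam f n * ((x - lam n : ℝ) : ℂ) +
    (((lam n - lam (n - 1)) ^ 2 : ℝ) : ℂ) * dd2 lam f (n - 1) *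
      ((qcub ((lam n - x) / (lam n - lam (n - 1))) : ℝ) : ℂ)

/-- The formula for `Φ₂ f` on `[λ_n, μ_n]`. -/
noncomputable def phi2R (lam : ℤ → ℝ) (f : ℤ → ℂ) (n : ℤ) (x : ℝ) : ℂ :=
  f n + alphaN lam f n * ((x - lam n : ℝ) : ℂ) +
    (((lam (n + 1) - lam n) ^ 2 : ℝ) : ℂ) * dd2 lam f (n - 1) *
      ((qcub ((x - lam n) / (lam (n + 1) - lam n)) : ℝ) : ℂ)

set_option maxHeartbeats 1000000

namespace Stmt5Aux
open MeasureTheory Set intervalIntegral Filter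
open scoped ENNReal NNReal

lemma two_term {p a b : ℝ} (hp : 1 ≤ p) (ha : 0 ≤ a) (hb : 0 ≤ b) :
    (a + b) ^ p ≤ 2 ^ p * (a ^ p + b ^ p) := by
  have h1 : a + b ≤ 2 * max a b := by
    rcases le_total a b with h | h
    · rw [max_eq_right h]; linarith
    · rw [max_eq_left h]; linarith
  calc (a + b) ^ p ≤ (2 * max a b) ^ p :=
        Real.rpow_le_rpow (by linarith) h1 (by linarith)
    _ = 2 ^ p * (max a b) ^ p := Real.mul_rpow (by norm_num) (le_max_iff.2 (Or.inl ha))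
    _ ≤ 2 ^ p * (a ^ p + b ^ p) := by
        gcongr
        rcases le_total a b with h | h
        · rw [max_eq_right h]; nlinarith [Real.rpow_nonneg ha p]
        · rw [max_eq_left h]; nlinarith [Real.rpow_nonneg hb p]

lemma rpow_base_le {p a b : ℝ} (hp : 1 ≤ p) (ha : 0 ≤ a) (hab : a ≤ b) : a ^ p ≤ b ^ p :=
  Real.rpow_le_rpow ha hab (by linarith)

/-- Hölder bridge: `p`-th power of an integral versus the lintegral of the `p`-th power. -/
lemma holder_bridge {p : ℝ} (hp : 1 ≤ p) {a b : ℝ} (hab : a < b) {g : ℝ → ℝ}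
    (hg0 : ∀ t, 0 ≤ g t) (hgi : IntegrableOn g (Icc a b)) :
    ENNReal.ofReal ((∫ t in a..b, g t) ^ p) ≤
      ENNReal.ofReal ((b - a) ^ (p - 1)) * ∫⁻ t in Icc a b, ENNReal.ofReal (g t ^ p) := by
  have hp0 : (0:ℝ) < p := by linarith
  have hIeq : (∫ t in a..b, g t) = ∫ t in Icc a b, g t := by
    rw [integral_of_le hab.le, ← integral_Icc_eq_integral_Ioc]
  have hint0 : 0 ≤ ∫ t in Icc a b, g t :=
    setIntegral_nonneg measurableSet_Icc fun t _ => hg0 t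
  have hofr : ENNReal.ofReal (∫ t in Icc a b, g t) = ∫⁻ t in Icc a b, ENNReal.ofReal (g t) :=
    ofReal_integral_eq_lintegral_ofReal hgi (Filter.Eventually.of_forall fun t => hg0 t)
  have hptw : ∀ t, ENNReal.ofReal (g t ^ p) = ENNReal.ofReal (g t) ^ p := fun t =>
    (ENNReal.ofReal_rpow_of_nonneg (hg0 t) hp0.le).symm
  rw [hIeq, ← ENNReal.ofReal_rpow_of_nonneg hint0 hp0.le, hofr]
  rcases eq_or_lt_of_le hp with hp1 | hp1
  · -- p = 1
    rw [← hp1]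
    simp only [Real.rpow_one, ENNReal.rpow_one, sub_self, Real.rpow_zero,
      ENNReal.ofReal_one, one_mul]
    exact le_of_eq (by simp [hptw, Real.rpow_one])
  · have hq : p.HolderConjugate (p / (p - 1)) := Real.HolderConjugate.conjExponent hp1
    have hmeas : AEMeasurable (fun t => ENNReal.ofReal (g t))
        (volume.restrict (Icc a b)) :=
      hgi.aestronglyMeasurable.aemeasurable.ennreal_ofReal
    have hH := ENNReal.lintegral_mul_le_Lp_mul_Lq (volume.restrict (Icc a b)) hq hmeas
      (aemeasurable_const (b := (1:ℝ≥0∞)))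
    simp only [Pi.mul_apply, mul_one, ENNReal.one_rpow, lintegral_const,
      Measure.restrict_apply_univ] at hH
    have hvol : volume (Icc a b) = ENNReal.ofReal (b - a) := Real.volume_Icc
    rw [hvol, one_mul] at hH
    have hHp := ENNReal.rpow_le_rpow hH hp0.le
    calc (∫⁻ t in Icc a b, ENNReal.ofReal (g t)) ^ p
        ≤ ((∫⁻ t in Icc a b, ENNReal.ofReal (g t) ^ p) ^ (1/p) *
            ENNReal.ofReal (b - a) ^ (1/(p/(p-1)))) ^ p := hHp
      _ = (∫⁻ t in Icc a b, ENNReal.ofReal (g t) ^ p) *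
            ENNReal.ofReal (b - a) ^ (p - 1) := by
          rw [ENNReal.mul_rpow_of_nonneg _ _ hp0.le, ← ENNReal.rpow_mul, ← ENNReal.rpow_mul]
          congr 1
          · rw [one_div_mul_cancel hp0.ne', ENNReal.rpow_one]
          · congr 1
            field_simp
      _ = ENNReal.ofReal ((b - a) ^ (p - 1)) * ∫⁻ t in Icc a b, ENNReal.ofReal (g t ^ p) := by
          rw [ENNReal.ofReal_rpow_of_nonneg (by linarith) (by linarith : (0:ℝ) ≤ p - 1)]
          rw [mul_comm]
          congr 1
          exact lintegral_congr fun t => (hptw t).symm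

end Stmt5Aux
namespace Stmt5Aux
open MeasureTheory Set intervalIntegral Filter
open scoped ENNReal NNReal

section Lower

variable {F G : ℝ → ℂ}

lemma deriv_sub_le (hF : ContDiff ℝ 1 F)
    (hFTC : ∀ a b : ℝ, a ≤ b → deriv F b - deriv F a = ∫ t in a..b, G t)
    (hG : LocallyIntegrable G volume) {a b : ℝ} (hab : a ≤ b) {s m : ℝ}
    (hs : s ∈ Icc a b) (hm : m ∈ Icc a b) :
    ‖deriv F s - deriv F m‖ ≤ ∫ t in a..b, ‖G t‖ := by
  have hGi : IntervalIntegrable (fun t => ‖G t‖) volume a b := by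
    have h1 : IntegrableOn (fun t => ‖G t‖) (uIcc a b) volume := by
      rw [uIcc_of_le hab]
      exact (hG.integrableOn_isCompact isCompact_Icc).norm
    exact h1.intervalIntegrable
  have key : ∀ u v : ℝ, u ∈ Icc a b → v ∈ Icc a b → u ≤ v →
      ‖deriv F v - deriv F u‖ ≤ ∫ t in a..b, ‖G t‖ := by
    intro u v hu hv huv
    rw [hFTC u v huv]
    calc ‖∫ t in u..v, G t‖ ≤ ∫ t in u..v, ‖G t‖ := norm_integral_le_integral_norm huv
      _ ≤ ∫ t in a..b, ‖G t‖ :=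
        integral_mono_interval hu.1 huv hv.2
          (Filter.Eventually.of_forall fun t => norm_nonneg _) hGi
  rcases le_total m s with h | h
  · exact key m s hm hs h
  · rw [norm_sub_rev]; exact key s m hs hm h

lemma avg_est (hF : ContDiff ℝ 1 F)
    (hFTC : ∀ a b : ℝ, a ≤ b → deriv F b - deriv F a = ∫ t in a..b, G t)
    (hG : LocallyIntegrable G volume) {a b x y m : ℝ}
    (hx : a ≤ x) (hxy : x ≤ y) (hyb : y ≤ b) (hm : m ∈ Icc a b) :
    ‖(F y - F x) - ((y - x : ℝ) : ℂ) * deriv F m‖ ≤ (y - x) * ∫ t in a..b, ‖G t‖ := by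
  have hcont : Continuous (deriv F) := hF.continuous_deriv le_rfl
  have hder : ∀ u ∈ uIcc x y, DifferentiableAt ℝ F u := fun u _ =>
    (hF.differentiable one_ne_zero).differentiableAt
  have h1 : F y - F x = ∫ t in x..y, deriv F t :=
    (integral_deriv_eq_sub hder (hcont.intervalIntegrable x y)).symm
  have h2 : ((y - x : ℝ) : ℂ) * deriv F m = ∫ t in x..y, deriv F m := by
    rw [intervalIntegral.integral_const, Complex.real_smul]
  rw [h1, h2, ← integral_sub (hcont.intervalIntegrable x y) intervalIntegrable_const]
  have hb := norm_integral_le_of_norm_le_const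
    (C := ∫ t in a..b, ‖G t‖) (f := fun t => deriv F t - deriv F m) (a := x) (b := y) ?_
  · rwa [abs_of_nonneg (by linarith : (0:ℝ) ≤ y - x), mul_comm] at hb
  · intro u hu
    rw [uIoc_of_le hxy] at hu
    exact deriv_sub_le hF hFTC hG (le_trans hx (le_trans hxy hyb))
      ⟨le_trans hx hu.1.le, le_trans hu.2 hyb⟩ hm

lemma taylor_est (hF : ContDiff ℝ 1 F)
    (hFTC : ∀ a b : ℝ, a ≤ b → deriv F b - deriv F a = ∫ t in a..b, G t)
    (hG : LocallyIntegrable G volume) {a b u x0 : ℝ}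
    (hu : u ∈ Icc a b) (hx0 : x0 ∈ Icc a b) :
    ‖F u - F x0 - ((u - x0 : ℝ) : ℂ) * deriv F x0‖ ≤ (b - a) * ∫ t in a..b, ‖G t‖ := by
  have hg0 : 0 ≤ ∫ t in a..b, ‖G t‖ :=
    intervalIntegral.integral_nonneg (le_trans hu.1 hu.2) fun t _ => norm_nonneg _
  rcases le_total x0 u with h | h
  · have := avg_est hF hFTC hG hx0.1 h hu.2 hx0
    calc ‖F u - F x0 - ((u - x0 : ℝ) : ℂ) * deriv F x0‖
        ≤ (u - x0) * ∫ t in a..b, ‖G t‖ := this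
      _ ≤ (b - a) * ∫ t in a..b, ‖G t‖ := by
          apply mul_le_mul_of_nonneg_right _ hg0
          linarith [hu.2, hx0.1]
  · have h2 := avg_est hF hFTC hG hu.1 h hx0.2 hx0
    have heq : F u - F x0 - ((u - x0 : ℝ) : ℂ) * deriv F x0 =
        -((F x0 - F u) - ((x0 - u : ℝ) : ℂ) * deriv F x0) := by
      push_cast; ring
    rw [heq, norm_neg]
    calc ‖(F x0 - F u) - ((x0 - u : ℝ) : ℂ) * deriv F x0‖
        ≤ (x0 - u) * ∫ t in a..b, ‖G t‖ := h2
      _ ≤ (b - a) * ∫ t in a..b, ‖G t‖ := by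
          apply mul_le_mul_of_nonneg_right _ hg0
          linarith [hu.1, hx0.2]

lemma moment0 {a b : ℝ} (k c : ℝ) :
    ∫ u in a..b, (4 + k * (u - c)) = 4*(b-a) + k*(((b-c)^2 - (a-c)^2)/2) := by
  have h1 : ∫ u in a..b, (u - c) = ((b-c)^2 - (a-c)^2)/2 := by
    rw [integral_comp_sub_right (fun v : ℝ => v) c, integral_id]
  have hi1 : IntervalIntegrable (fun u : ℝ => (4:ℝ)) volume a b := intervalIntegrable_const
  have hi2 : IntervalIntegrable (fun u : ℝ => k * (u - c)) volume a b := by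
    apply Continuous.intervalIntegrable; fun_prop
  rw [integral_add hi1 hi2, intervalIntegral.integral_const, intervalIntegral.integral_const_mul, h1]
  simp [smul_eq_mul]; ring

lemma moment1 {a b : ℝ} (k c : ℝ) :
    ∫ u in a..b, (4 + k * (u - c)) * (u - c) =
      4*(((b-c)^2 - (a-c)^2)/2) + k*(((b-c)^3 - (a-c)^3)/3) := by
  have h1 : ∫ u in a..b, (u - c) = ((b-c)^2 - (a-c)^2)/2 := by
    rw [integral_comp_sub_right (fun v : ℝ => v) c, integral_id]
  have h2 : ∫ u in a..b, (u - c)^2 = ((b-c)^3 - (a-c)^3)/3 := by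
    rw [integral_comp_sub_right (fun v : ℝ => v^2) c, integral_pow]
    norm_num
  have hcong : ∀ u : ℝ, (4 + k * (u - c)) * (u - c) = 4 * (u - c) + k * (u - c)^2 := by
    intro u; ring
  rw [integral_congr (fun u _ => hcong u)]
  have hi1 : IntervalIntegrable (fun u : ℝ => 4 * (u - c)) volume a b := by
    apply Continuous.intervalIntegrable; fun_prop
  have hi2 : IntervalIntegrable (fun u : ℝ => k * (u - c)^2) volume a b := by
    apply Continuous.intervalIntegrable; fun_prop
  rw [integral_add hi1 hi2, intervalIntegral.integral_const_mul, intervalIntegral.integral_const_mul, h1, h2]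

/-- The main weighted-average estimate for the value at a point. -/
lemma weight_est (hF : ContDiff ℝ 1 F)
    (hFTC : ∀ a b : ℝ, a ≤ b → deriv F b - deriv F a = ∫ t in a..b, G t)
    (hG : LocallyIntegrable G volume) {a b x0 : ℝ} (hab : a < b)
    (hx0 : x0 ∈ Icc a b) {w : ℝ → ℝ} (hw : Continuous w)
    (hwb : ∀ u ∈ Icc a b, |w u| ≤ 4)
    (hm0 : (∫ u in a..b, w u) = b - a)
    (hm1 : (∫ u in a..b, w u * (u - x0)) = 0) :
    ‖F x0‖ ≤ (4 / (b - a)) * (∫ t in a..b, ‖F t‖) + (4 * (b - a)) * ∫ t in a..b, ‖G t‖ := by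
  have hb : (0:ℝ) < b - a := by linarith
  set gI := ∫ t in a..b, ‖G t‖ with hgIdef
  set fI := ∫ t in a..b, ‖F t‖ with hfIdef
  have hgI0 : 0 ≤ gI := intervalIntegral.integral_nonneg hab.le fun t _ => norm_nonneg _
  have hFc : Continuous F := hF.continuous
  set R : ℝ → ℂ := fun u => F u - F x0 - ((u - x0 : ℝ) : ℂ) * deriv F x0 with hRdef
  have hRb : ∀ u ∈ Icc a b, ‖R u‖ ≤ (b - a) * gI := fun u hu =>
    taylor_est hF hFTC hG hu hx0
  have hRcont : Continuous R := by
    apply Continuous.sub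
    · exact hFc.sub continuous_const
    · exact (Complex.continuous_ofReal.comp (continuous_id.sub continuous_const)).mul
        continuous_const
  have hwC : Continuous fun u : ℝ => ((w u : ℝ) : ℂ) :=
    Complex.continuous_ofReal.comp hw
  -- key identity
  have hkey : (∫ u in a..b, ((w u : ℝ) : ℂ) * F u) =
      ((b - a : ℝ) : ℂ) * F x0 + ∫ u in a..b, ((w u : ℝ) : ℂ) * R u := by
    have hexp : ∀ u : ℝ, ((w u : ℝ) : ℂ) * F u =
        ((w u : ℝ) : ℂ) * R u + ((w u : ℝ) : ℂ) * F x0 +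
          ((w u * (u - x0) : ℝ) : ℂ) * deriv F x0 := by
      intro u; rw [hRdef]; push_cast; ring
    rw [integral_congr (fun u _ => hexp u)]
    have hi1 : IntervalIntegrable (fun u : ℝ => ((w u : ℝ) : ℂ) * R u) volume a b :=
      (hwC.mul hRcont).intervalIntegrable a b
    have hi2 : IntervalIntegrable (fun u : ℝ => ((w u : ℝ) : ℂ) * F x0) volume a b :=
      (hwC.mul continuous_const).intervalIntegrable a b
    have hi3 : IntervalIntegrable
        (fun u : ℝ => ((w u * (u - x0) : ℝ) : ℂ) * deriv F x0) volume a b := by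
      apply Continuous.intervalIntegrable
      exact (Complex.continuous_ofReal.comp (hw.mul (continuous_id.sub continuous_const))).mul
        continuous_const
    rw [integral_add (hi1.add hi2) hi3, integral_add hi1 hi2]
    have e2 : (∫ u in a..b, ((w u : ℝ) : ℂ) * F x0) = ((b - a : ℝ) : ℂ) * F x0 := by
      rw [intervalIntegral.integral_mul_const, intervalIntegral.integral_ofReal, hm0]
    have e3 : (∫ u in a..b, ((w u * (u - x0) : ℝ) : ℂ) * deriv F x0) = 0 := by
      rw [intervalIntegral.integral_mul_const, intervalIntegral.integral_ofReal, hm1]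
      simp
    rw [e2, e3]; ring
  -- bounds
  have h1 : ‖∫ u in a..b, ((w u : ℝ) : ℂ) * F u‖ ≤ 4 * fI := by
    calc ‖∫ u in a..b, ((w u : ℝ) : ℂ) * F u‖
        ≤ ∫ u in a..b, ‖((w u : ℝ) : ℂ) * F u‖ := norm_integral_le_integral_norm hab.le
      _ ≤ ∫ u in a..b, 4 * ‖F u‖ := by
          apply integral_mono_on hab.le
          · exact ((hwC.mul hFc).norm).intervalIntegrable a b
          · exact (continuous_const.mul hFc.norm).intervalIntegrable a b
          · intro u hu
            rw [norm_mul, Complex.norm_real, Real.norm_eq_abs]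
            exact mul_le_mul_of_nonneg_right (hwb u hu) (norm_nonneg _)
      _ = 4 * fI := by rw [intervalIntegral.integral_const_mul]
  have h2 : ‖∫ u in a..b, ((w u : ℝ) : ℂ) * R u‖ ≤ 4 * ((b - a) * gI) * (b - a) := by
    have := norm_integral_le_of_norm_le_const
      (C := 4 * ((b - a) * gI)) (f := fun u => ((w u : ℝ) : ℂ) * R u) (a := a) (b := b) ?_
    · rwa [abs_of_nonneg hb.le] at this
    · intro u hu
      rw [uIoc_of_le hab.le] at hu
      have hu' : u ∈ Icc a b := ⟨hu.1.le, hu.2⟩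
      rw [norm_mul, Complex.norm_real, Real.norm_eq_abs]
      have := mul_le_mul (hwb u hu') (hRb u hu') (norm_nonneg _) (by norm_num)
      linarith
  -- conclude
  have hmain : (b - a) * ‖F x0‖ ≤ 4 * fI + 4 * ((b - a) * gI) * (b - a) := by
    have : ((b - a : ℝ) : ℂ) * F x0 =
        (∫ u in a..b, ((w u : ℝ) : ℂ) * F u) - ∫ u in a..b, ((w u : ℝ) : ℂ) * R u := by
      rw [hkey]; ring
    have hnorm : ‖((b - a : ℝ) : ℂ) * F x0‖ = (b - a) * ‖F x0‖ := by
      rw [norm_mul, Complex.norm_real, Real.norm_eq_abs, abs_of_nonneg hb.le]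
    calc (b - a) * ‖F x0‖ = ‖((b - a : ℝ) : ℂ) * F x0‖ := hnorm.symm
      _ ≤ ‖∫ u in a..b, ((w u : ℝ) : ℂ) * F u‖ + ‖∫ u in a..b, ((w u : ℝ) : ℂ) * R u‖ := by
          rw [this]; exact norm_sub_le _ _
      _ ≤ 4 * fI + 4 * ((b - a) * gI) * (b - a) := add_le_add h1 h2
  have hfin : ‖F x0‖ ≤ (4 * fI + 4 * ((b - a) * gI) * (b - a)) / (b - a) :=
    (le_div_iff₀ hb).2 (by linarith)
  calc ‖F x0‖ ≤ (4 * fI + 4 * ((b - a) * gI) * (b - a)) / (b - a) := hfin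
    _ = (4 / (b - a)) * fI + (4 * (b - a)) * gI := by
        have hne : b - a ≠ 0 := hb.ne'
        field_simp
        try ring
        try tauto

/-- Estimate for the left endpoint. -/
lemma endpoint_left (hF : ContDiff ℝ 1 F)
    (hFTC : ∀ a b : ℝ, a ≤ b → deriv F b - deriv F a = ∫ t in a..b, G t)
    (hG : LocallyIntegrable G volume) {a b : ℝ} (hab : a < b) :
    ‖F a‖ ≤ (4 / (b - a)) * (∫ t in a..b, ‖F t‖) + (4 * (b - a)) * ∫ t in a..b, ‖G t‖ := by
  have hb : (0:ℝ) < b - a := by linarith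
  apply weight_est hF hFTC hG hab (left_mem_Icc.2 hab.le)
    (w := fun u => 4 + (-6/(b-a)) * (u - a))
  · fun_prop
  · intro u hu
    rw [abs_le]
    have h1 : 0 ≤ (u - a) / (b - a) := div_nonneg (by linarith [hu.1]) hb.le
    have h2 : (u - a) / (b - a) ≤ 1 := (div_le_one hb).2 (by linarith [hu.2])
    constructor
    · have : (-6/(b-a)) * (u - a) = -(6 * ((u-a)/(b-a))) := by field_simp
      rw [this]; linarith
    · have : (-6/(b-a)) * (u - a) = -(6 * ((u-a)/(b-a))) := by field_simp
      rw [this]; linarith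
  · rw [moment0]; field_simp; ring
  · rw [moment1]; field_simp; ring

/-- Estimate for the right endpoint. -/
lemma endpoint_right (hF : ContDiff ℝ 1 F)
    (hFTC : ∀ a b : ℝ, a ≤ b → deriv F b - deriv F a = ∫ t in a..b, G t)
    (hG : LocallyIntegrable G volume) {a b : ℝ} (hab : a < b) :
    ‖F b‖ ≤ (4 / (b - a)) * (∫ t in a..b, ‖F t‖) + (4 * (b - a)) * ∫ t in a..b, ‖G t‖ := by
  have hb : (0:ℝ) < b - a := by linarith
  apply weight_est hF hFTC hG hab (right_mem_Icc.2 hab.le)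
    (w := fun u => 4 + (6/(b-a)) * (u - b))
  · fun_prop
  · intro u hu
    rw [abs_le]
    have h1 : 0 ≤ (b - u) / (b - a) := div_nonneg (by linarith [hu.2]) hb.le
    have h2 : (b - u) / (b - a) ≤ 1 := (div_le_one hb).2 (by linarith [hu.1])
    have key : (6/(b-a)) * (u - b) = -(6 * ((b-u)/(b-a))) := by field_simp; ring
    constructor
    · rw [key]; linarith
    · rw [key]; linarith
  · rw [moment0]; field_simp; ring
  · rw [moment1]; field_simp; ring

end Lower
end Stmt5Aux
namespace Stmt5Aux
open MeasureTheory Set intervalIntegral Filter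
open scoped ENNReal NNReal

section Construction

variable (lam : ℤ → ℝ) (f : ℤ → ℂ)

lemma exists_idx (hg : GoodSeq lam) (x : ℝ) : ∃ n : ℤ, lam n ≤ x ∧ x < lam (n + 1) := by
  obtain ⟨m0, hm0⟩ : ∃ m, lam m ≤ x := (hg.2.1.eventually (eventually_le_atBot x)).exists
  obtain ⟨m1, hm1⟩ : ∃ m, x < lam m := (hg.2.2.eventually (eventually_gt_atTop x)).exists
  have hbdd : ∀ z : ℤ, lam z ≤ x → z ≤ m1 := by
    intro z hz
    by_contra hzz
    push_neg at hzz
    have : lam m1 ≤ lam z := hg.1.monotone (by omega)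
    linarith
  obtain ⟨n, hn, hmax⟩ := Int.exists_greatest_of_bdd ⟨m1, hbdd⟩ ⟨m0, hm0⟩
  refine ⟨n, hn, ?_⟩
  by_contra h
  push_neg at h
  have := hmax (n + 1) h
  omega

noncomputable def idx (hg : GoodSeq lam) (x : ℝ) : ℤ := (exists_idx lam hg x).choose

lemma idx_le (hg : GoodSeq lam) (x : ℝ) : lam (idx lam hg x) ≤ x :=
  (exists_idx lam hg x).choose_spec.1

lemma lt_idx (hg : GoodSeq lam) (x : ℝ) : x < lam (idx lam hg x + 1) :=
  (exists_idx lam hg x).choose_spec.2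

lemma idx_eq (hg : GoodSeq lam) {n : ℤ} {x : ℝ} (h1 : lam n ≤ x) (h2 : x < lam (n + 1)) :
    idx lam hg x = n := by
  have hm1 := idx_le lam hg x
  have hm2 := lt_idx lam hg x
  by_contra h
  rcases lt_or_gt_of_ne h with hlt | hgt
  · have : lam (idx lam hg x + 1) ≤ lam n := hg.1.monotone (by omega)
    linarith
  · have : lam (n + 1) ≤ lam (idx lam hg x) := hg.1.monotone (by omega)
    linarith

lemma idx_lam (hg : GoodSeq lam) (n : ℤ) : idx lam hg (lam n) = n :=
  idx_eq lam hg le_rfl (hg.1 (by omega))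

lemma idx_mono (hg : GoodSeq lam) : Monotone (idx lam hg) := by
  intro x y hxy
  by_contra h
  push_neg at h
  have h1 : lam (idx lam hg y + 1) ≤ lam (idx lam hg x) := hg.1.monotone (by omega)
  have h2 := lt_idx lam hg y
  have h3 := idx_le lam hg x
  linarith

/-- Nonzero denominators. -/
lemma den_ne (hs : StrictMono lam) {m n : ℤ} (hmn : m < n) :
    ((lam n - lam m : ℝ) : ℂ) ≠ 0 :=
  Complex.ofReal_ne_zero.mpr (sub_ne_zero.mpr (hs hmn).ne')

lemma key1 (hs : StrictMono lam) (n : ℤ) :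
    alphaN lam f n = dd1 lam f n - ((lam (n + 1) - lam n : ℝ) : ℂ) * dd2 lam f (n - 1) := by
  have e1 : n - 1 + 1 = n := by ring
  have e2 : n - 1 + 2 = n + 1 := by ring
  set A := dd1 lam f (n - 1) with hA
  set B := dd1 lam f n with hB
  set D : ℂ := ((lam (n + 1) - lam (n - 1) : ℝ) : ℂ) with hDdef
  set h1 : ℂ := ((lam (n + 1) - lam n : ℝ) : ℂ) with hh1
  set h0 : ℂ := ((lam n - lam (n - 1) : ℝ) : ℂ) with hh0
  have hD : D ≠ 0 := den_ne lam hs (by omega)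
  have hrel : h0 + h1 = D := by rw [hh0, hh1, hDdef]; push_cast; ring
  unfold alphaN dd2
  rw [e1, e2, ← hA, ← hB, ← hDdef, ← hh1, ← hh0]
  field_simp
  linear_combination B * hrel

lemma key2 (hs : StrictMono lam) (n : ℤ) :
    alphaN lam f (n + 1) = dd1 lam f n + ((lam (n + 1) - lam n : ℝ) : ℂ) * dd2 lam f n := by
  have e1 : n + 1 - 1 = n := by ring
  have e2 : n + 1 + 1 = n + 2 := by ring
  set B := dd1 lam f n with hB
  set Bp := dd1 lam f (n + 1) with hBp
  set D : ℂ := ((lam (n + 2) - lam n : ℝ) : ℂ) with hDdef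
  set h1 : ℂ := ((lam (n + 1) - lam n : ℝ) : ℂ) with hh1
  set h2 : ℂ := ((lam (n + 2) - lam (n + 1) : ℝ) : ℂ) with hh2
  have hD : D ≠ 0 := den_ne lam hs (by omega)
  have hrel : h1 + h2 = D := by rw [hh1, hh2, hDdef]; push_cast; ring
  unfold alphaN dd2
  rw [e1, e2, ← hB, ← hBp, ← hDdef, ← hh1, ← hh2]
  field_simp
  linear_combination B * hrel

noncomputable def c2v (n : ℤ) : ℂ := 2 * dd2 lam f (n - 1) - dd2 lam f n

noncomputable def c3v (n : ℤ) : ℂ :=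
  (dd2 lam f n - dd2 lam f (n - 1)) / ((lam (n + 1) - lam n : ℝ) : ℂ)

noncomputable def Pf (n : ℤ) (x : ℝ) : ℂ :=
  f n + alphaN lam f n * ((x - lam n : ℝ) : ℂ) +
    c2v lam f n * (((x - lam n : ℝ) : ℂ) * ((x - lam n : ℝ) : ℂ)) +
    c3v lam f n * (((x - lam n : ℝ) : ℂ) * ((x - lam n : ℝ) : ℂ) * ((x - lam n : ℝ) : ℂ))

noncomputable def Pdf (n : ℤ) (x : ℝ) : ℂ :=
  alphaN lam f n + 2 * c2v lam f n * ((x - lam n : ℝ) : ℂ) +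
    3 * c3v lam f n * (((x - lam n : ℝ) : ℂ) * ((x - lam n : ℝ) : ℂ))

noncomputable def Qf (n : ℤ) (x : ℝ) : ℂ :=
  2 * c2v lam f n + 6 * c3v lam f n * ((x - lam n : ℝ) : ℂ)

lemma Pf_left (n : ℤ) : Pf lam f n (lam n) = f n := by
  simp [Pf]

lemma Pdf_left (n : ℤ) : Pdf lam f n (lam n) = alphaN lam f n := by
  simp [Pdf]

lemma Pf_right (hs : StrictMono lam) (n : ℤ) : Pf lam f n (lam (n + 1)) = f (n + 1) := by
  set X : ℂ := ((lam (n + 1) - lam n : ℝ) : ℂ) with hX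
  have hne : X ≠ 0 := den_ne lam hs (by omega)
  set d0 := dd2 lam f (n - 1) with hd0
  set d1 := dd2 lam f n with hd1
  rw [Pf, key1 lam f hs n, c2v, c3v]
  unfold dd1
  rw [← hX, ← hd0, ← hd1]
  field_simp
  ring

lemma Pdf_right (hs : StrictMono lam) (n : ℤ) :
    Pdf lam f n (lam (n + 1)) = alphaN lam f (n + 1) := by
  set X : ℂ := ((lam (n + 1) - lam n : ℝ) : ℂ) with hX
  have hne : X ≠ 0 := den_ne lam hs (by omega)
  set d0 := dd2 lam f (n - 1) with hd0
  set d1 := dd2 lam f n with hd1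
  rw [Pdf, key1 lam f hs n, key2 lam f hs n, c2v, c3v]
  rw [← hX, ← hd0, ← hd1]
  field_simp
  ring

lemma hasDeriv_base (c : ℝ) (x : ℝ) :
    HasDerivAt (fun y : ℝ => ((y - c : ℝ) : ℂ)) 1 x := by
  have h : HasDerivAt (fun y : ℝ => (y : ℂ)) 1 x := by
    simpa using (hasDerivAt_id x).ofReal_comp
  simpa [Complex.ofReal_sub] using h.sub_const (c : ℂ)

lemma Pf_hasDeriv (n : ℤ) (x : ℝ) : HasDerivAt (Pf lam f n) (Pdf lam f n x) x := by
  have hb := hasDeriv_base (lam n) x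
  have h1 := hb.const_mul (alphaN lam f n)
  have h2 := ((hb.mul hb).const_mul (c2v lam f n))
  have h3 := (((hb.mul hb).mul hb).const_mul (c3v lam f n))
  have H := ((h1.const_add (f n)).add h2).add h3
  convert H using 1
  · rfl
  · rfl
  simp only [Pdf, Pi.mul_apply]; ring

lemma Pdf_hasDeriv (n : ℤ) (x : ℝ) : HasDerivAt (Pdf lam f n) (Qf lam f n x) x := by
  have hb := hasDeriv_base (lam n) x
  have h1 := hb.const_mul (2 * c2v lam f n)
  have h2 := ((hb.mul hb).const_mul (3 * c3v lam f n))
  have H := (h1.const_add (alphaN lam f n)).add h2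
  convert H using 1
  · rfl
  · rfl
  simp only [Qf, Pi.mul_apply]; ring

lemma Pf_continuous (n : ℤ) : Continuous (Pf lam f n) :=
  continuous_iff_continuousAt.mpr fun x => (Pf_hasDeriv lam f n x).continuousAt

lemma Pdf_continuous (n : ℤ) : Continuous (Pdf lam f n) :=
  continuous_iff_continuousAt.mpr fun x => (Pdf_hasDeriv lam f n x).continuousAt

lemma Qf_continuous (n : ℤ) : Continuous (Qf lam f n) := by
  unfold Qf
  exact continuous_const.add (continuous_const.mul
    (Complex.continuous_ofReal.comp (continuous_id.sub continuous_const)))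

noncomputable def Fc (hg : GoodSeq lam) : ℝ → ℂ := fun x => Pf lam f (idx lam hg x) x
noncomputable def Dc (hg : GoodSeq lam) : ℝ → ℂ := fun x => Pdf lam f (idx lam hg x) x
noncomputable def Gc (hg : GoodSeq lam) : ℝ → ℂ := fun x => Qf lam f (idx lam hg x) x

/-- Local representation of a piecewise family near a point. -/
lemma local_rep (hg : GoodSeq lam) (J : ℤ → ℝ → ℂ) (n0 : ℤ) :
    Set.EqOn (fun x => J (idx lam hg x) x)
      (fun x => if x < lam n0 then J (n0 - 1) x else J n0 x)
      (Ioo (lam (n0 - 1)) (lam (n0 + 1))) := by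
  intro x hx
  rcases lt_or_ge x (lam n0) with h | h
  · have : idx lam hg x = n0 - 1 := by
      apply idx_eq lam hg hx.1.le
      rwa [show n0 - 1 + 1 = n0 by ring]
    simp only [this, if_pos h]
  · have : idx lam hg x = n0 := idx_eq lam hg h hx.2
    simp only [this, if_neg (not_lt.mpr h)]

lemma glue_hasDerivAt {u v du dv : ℝ → ℂ} {c : ℝ}
    (hu : ∀ x, HasDerivAt u (du x) x) (hv : ∀ x, HasDerivAt v (dv x) x)
    (hval : u c = v c) (hder : du c = dv c) (x : ℝ) :
    HasDerivAt (fun y => if y < c then u y else v y) (if x < c then du x else dv x) x := by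
  rcases lt_trichotomy x c with h | h | h
  · rw [if_pos h]
    apply (hu x).congr_of_eventuallyEq
    filter_upwards [Iio_mem_nhds h] with y hy
    rw [if_pos (mem_Iio.mp hy)]
  · subst h
    rw [if_neg (lt_irrefl x)]
    have hIic : HasDerivWithinAt (fun y => if y < x then u y else v y) (du x) (Iic x) x := by
      apply (hu x).hasDerivWithinAt.congr
      · intro y hy
        rcases lt_or_eq_of_le (mem_Iic.mp hy) with hy' | hy'
        · rw [if_pos hy']
        · subst hy'; rw [if_neg (lt_irrefl y)]; exact hval.symm
      · rw [if_neg (lt_irrefl x)]; exact hval.symm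
    have hIci : HasDerivWithinAt (fun y => if y < x then u y else v y) (dv x) (Ici x) x := by
      apply (hv x).hasDerivWithinAt.congr
      · intro y hy
        rw [if_neg (not_lt.mpr (mem_Ici.mp hy))]
      · rw [if_neg (lt_irrefl x)]
    rw [hder] at hIic
    have := hIic.union hIci
    rw [Iic_union_Ici] at this
    exact hasDerivWithinAt_univ.mp this
  · rw [if_neg (not_lt.mpr h.le)]
    apply (hv x).congr_of_eventuallyEq
    filter_upwards [Ioi_mem_nhds h] with y hy
    rw [if_neg (not_lt.mpr (mem_Ioi.mp hy).le)]

lemma glue_continuous {u v : ℝ → ℂ} {c : ℝ}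
    (hu : Continuous u) (hv : Continuous v) (hval : u c = v c) :
    Continuous fun y => if y < c then u y else v y := by
  rw [continuous_iff_continuousAt]
  intro x
  rcases lt_trichotomy x c with h | h | h
  · apply ContinuousAt.congr hu.continuousAt
    filter_upwards [Iio_mem_nhds h] with y hy
    rw [if_pos (mem_Iio.mp hy)]
  · subst h
    have hIic : ContinuousWithinAt (fun y => if y < x then u y else v y) (Iic x) x := by
      apply (hu.continuousAt.continuousWithinAt (s := Iic x)).congr
      · intro y hy
        rcases lt_or_eq_of_le (mem_Iic.mp hy) with hy' | hy'
        · rw [if_pos hy']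
        · subst hy'; rw [if_neg (lt_irrefl y)]; exact hval.symm
      · rw [if_neg (lt_irrefl x)]; exact hval.symm
    have hIci : ContinuousWithinAt (fun y => if y < x then u y else v y) (Ici x) x := by
      apply (hv.continuousAt.continuousWithinAt (s := Ici x)).congr
      · intro y hy
        rw [if_neg (not_lt.mpr (mem_Ici.mp hy))]
      · rw [if_neg (lt_irrefl x)]
    have := hIic.union hIci
    rw [Iic_union_Ici] at this
    exact continuousWithinAt_univ _ _ |>.mp this
  · apply ContinuousAt.congr hv.continuousAt
    filter_upwards [Ioi_mem_nhds h] with y hy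
    rw [if_neg (not_lt.mpr (mem_Ioi.mp hy).le)]

lemma U_mem_nhds (hg : GoodSeq lam) (x : ℝ) :
    Ioo (lam (idx lam hg x - 1)) (lam (idx lam hg x + 1)) ∈ nhds x := by
  apply Ioo_mem_nhds
  · exact lt_of_lt_of_le (hg.1 (by omega)) (idx_le lam hg x)
  · exact lt_idx lam hg x

lemma glue_match_val (hs : StrictMono lam) (n0 : ℤ) :
    Pf lam f (n0 - 1) (lam n0) = Pf lam f n0 (lam n0) := by
  have := Pf_right lam f hs (n0 - 1)
  rw [show n0 - 1 + 1 = n0 by ring] at this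
  rw [this, Pf_left]

lemma glue_match_der (hs : StrictMono lam) (n0 : ℤ) :
    Pdf lam f (n0 - 1) (lam n0) = Pdf lam f n0 (lam n0) := by
  have := Pdf_right lam f hs (n0 - 1)
  rw [show n0 - 1 + 1 = n0 by ring] at this
  rw [this, Pdf_left]

lemma Fc_hasDeriv (hg : GoodSeq lam) (x : ℝ) :
    HasDerivAt (Fc lam f hg) (Dc lam f hg x) x := by
  set n0 := idx lam hg x with hn0
  have hglue := glue_hasDerivAt (u := Pf lam f (n0 - 1)) (v := Pf lam f n0)
    (du := Pdf lam f (n0 - 1)) (dv := Pdf lam f n0) (c := lam n0)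
    (Pf_hasDeriv lam f (n0 - 1)) (Pf_hasDeriv lam f n0)
    (glue_match_val lam f hg.1 n0) (glue_match_der lam f hg.1 n0) x
  have hxc : ¬ x < lam n0 := not_lt.mpr (idx_le lam hg x)
  rw [if_neg hxc] at hglue
  have heq : Fc lam f hg =ᶠ[nhds x] fun y => if y < lam n0 then Pf lam f (n0 - 1) y
      else Pf lam f n0 y :=
    Filter.eventuallyEq_of_mem (U_mem_nhds lam hg x) (local_rep lam hg (Pf lam f) n0)
  exact hglue.congr_of_eventuallyEq heq

lemma Dc_continuous (hg : GoodSeq lam) : Continuous (Dc lam f hg) := by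
  rw [continuous_iff_continuousAt]
  intro x
  set n0 := idx lam hg x with hn0
  have hglue : Continuous fun y => if y < lam n0 then Pdf lam f (n0 - 1) y
      else Pdf lam f n0 y :=
    glue_continuous (Pdf_continuous lam f (n0 - 1)) (Pdf_continuous lam f n0)
      (glue_match_der lam f hg.1 n0)
  apply ContinuousAt.congr hglue.continuousAt
  exact (Filter.eventuallyEq_of_mem (U_mem_nhds lam hg x)
    (local_rep lam hg (Pdf lam f) n0)).symm

lemma deriv_Fc (hg : GoodSeq lam) : deriv (Fc lam f hg) = Dc lam f hg :=
  funext fun x => (Fc_hasDeriv lam f hg x).deriv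

lemma Fc_contDiff (hg : GoodSeq lam) : ContDiff ℝ 1 (Fc lam f hg) := by
  rw [contDiff_one_iff_deriv]
  refine ⟨fun x => (Fc_hasDeriv lam f hg x).differentiableAt, ?_⟩
  rw [deriv_Fc lam f hg]
  exact Dc_continuous lam f hg

lemma Dc_hasDerivWithinAt (hg : GoodSeq lam) (x : ℝ) :
    HasDerivWithinAt (Dc lam f hg) (Gc lam f hg x) (Ioi x) x := by
  set n := idx lam hg x with hn
  have h1 : Ioo x (lam (n + 1)) ∈ nhdsWithin x (Ioi x) :=
    Ioo_mem_nhdsGT_of_mem ⟨le_refl x, lt_idx lam hg x⟩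
  apply ((Pdf_hasDeriv lam f n x).hasDerivWithinAt (s := Ioi x)).congr_of_eventuallyEq
  · filter_upwards [h1] with y hy
    have : idx lam hg y = n :=
      idx_eq lam hg (le_trans (idx_le lam hg x) hy.1.le) hy.2
    simp only [Dc, this]
  · rfl

lemma idx_measurable (hg : GoodSeq lam) : Measurable (idx lam hg) := by
  apply measurable_to_countable'
  intro n
  have : idx lam hg ⁻¹' {n} = Ico (lam n) (lam (n + 1)) := by
    ext x
    simp only [mem_preimage, mem_singleton_iff, mem_Ico]
    constructor
    · rintro rfl
      exact ⟨idx_le lam hg x, lt_idx lam hg x⟩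
    · rintro ⟨h1, h2⟩
      exact idx_eq lam hg h1 h2
  rw [this]
  exact measurableSet_Ico

lemma meas_piece (J : ℤ → ℝ → ℂ) (hJ : ∀ n, Measurable (J n)) {j : ℝ → ℤ}
    (hj : Measurable j) : Measurable fun x => J (j x) x := by
  have h1 : Measurable fun q : ℝ × ℤ => J q.2 q.1 :=
    measurable_from_prod_countable_left (f := fun q : ℝ × ℤ => J q.2 q.1) fun n => hJ n
  have h2 : Measurable fun x : ℝ => (x, j x) := measurable_id.prodMk hj
  exact h1.comp h2

lemma Gc_measurable (hg : GoodSeq lam) : Measurable (Gc lam f hg) := by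
  have hQ : ∀ n : ℤ, Measurable (Qf lam f n) := by
    intro n
    apply Continuous.measurable
    exact Qf_continuous lam f n
  unfold Gc
  exact meas_piece (Qf lam f) hQ (idx_measurable lam hg)

lemma Gc_eqOn (hg : GoodSeq lam) (n : ℤ) :
    EqOn (Gc lam f hg) (Qf lam f n) (Ico (lam n) (lam (n + 1))) := by
  intro x hx
  have : idx lam hg x = n := idx_eq lam hg hx.1 hx.2
  simp only [Gc, this]

lemma Gc_integrableOn (hg : GoodSeq lam) (a b : ℝ) :
    IntegrableOn (Gc lam f hg) (Icc a b) volume := by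
  have cover : Icc a b ⊆
      ⋃ n ∈ Finset.Icc (idx lam hg a) (idx lam hg b), Ico (lam n) (lam (n + 1)) := by
    intro x hx
    simp only [mem_iUnion, Finset.mem_Icc]
    exact ⟨idx lam hg x, ⟨idx_mono lam hg hx.1, idx_mono lam hg hx.2⟩,
      idx_le lam hg x, lt_idx lam hg x⟩
  apply IntegrableOn.mono_set _ cover
  rw [integrableOn_finset_iUnion]
  intro n _
  apply IntegrableOn.congr_fun _ (Gc_eqOn lam f hg n).symm measurableSet_Ico
  exact ((Qf_continuous lam f n).integrableOn_Icc).mono_set Ico_subset_Icc_self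

lemma Gc_locInt (hg : GoodSeq lam) : LocallyIntegrable (Gc lam f hg) volume := by
  rw [locallyIntegrable_iff]
  intro k hk
  obtain ⟨r, hr⟩ := hk.isBounded.subset_closedBall 0
  rw [Real.closedBall_eq_Icc] at hr
  exact (Gc_integrableOn lam f hg _ _).mono_set hr

lemma Fc_FTC (hg : GoodSeq lam) (a b : ℝ) (hab : a ≤ b) :
    deriv (Fc lam f hg) b - deriv (Fc lam f hg) a = ∫ t in a..b, Gc lam f hg t := by
  rw [deriv_Fc lam f hg]
  have hint : IntervalIntegrable (Gc lam f hg) volume a b := by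
    have := Gc_integrableOn lam f hg a b
    rw [← uIcc_of_le hab] at this
    exact this.intervalIntegrable
  exact (integral_eq_sub_of_hasDeriv_right_of_le hab
    ((Dc_continuous lam f hg).continuousOn)
    (fun x _ => Dc_hasDerivWithinAt lam f hg x) hint).symm

lemma Fc_interp (hg : GoodSeq lam) (n : ℤ) : Fc lam f hg (lam n) = f n := by
  simp only [Fc, idx_lam lam hg n, Pf_left]

lemma Fc_admissible (hg : GoodSeq lam) :
    AdmissibleExt 2 lam f (Fc lam f hg) (Gc lam f hg) := by
  have h21 : (2 - 1 : ℕ) = 1 := rfl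
  refine ⟨?_, Gc_locInt lam f hg, ?_, Fc_interp lam f hg⟩
  · rw [h21]
    push_cast
    exact Fc_contDiff lam f hg
  · intro a b hab
    rw [h21, iteratedDeriv_one]
    exact Fc_FTC lam f hg a b hab

end Construction
end Stmt5Aux
namespace Stmt5Aux
open MeasureTheory Set intervalIntegral Filter
open scoped ENNReal NNReal

lemma norm_ofReal_cast (r : ℝ) : ‖((r : ℝ) : ℂ)‖ = |r| := by
  rw [Complex.norm_real, Real.norm_eq_abs]

lemma four_term {p a b c d : ℝ} (hp : 1 ≤ p) (ha : 0 ≤ a) (hb : 0 ≤ b) (hc : 0 ≤ c)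
    (hd : 0 ≤ d) : (a + b + c + d) ^ p ≤ 4 ^ p * (a ^ p + b ^ p + c ^ p + d ^ p) := by
  have h1 : (a + b + c + d) ^ p ≤ 2 ^ p * ((a + b) ^ p + (c + d) ^ p) := by
    have := two_term (a := a + b) (b := c + d) hp (by linarith) (by linarith)
    calc (a + b + c + d) ^ p = ((a + b) + (c + d)) ^ p := by ring_nf
      _ ≤ 2 ^ p * ((a + b) ^ p + (c + d) ^ p) := this
  have h2 := two_term (a := a) (b := b) hp ha hb
  have h3 := two_term (a := c) (b := d) hp hc hd
  have h4 : (0:ℝ) ≤ 2 ^ p := Real.rpow_nonneg (by norm_num) p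
  have h44 : (2:ℝ) ^ p * 2 ^ p = 4 ^ p := by
    rw [← Real.mul_rpow (by norm_num) (by norm_num)]; norm_num
  calc (a + b + c + d) ^ p ≤ 2 ^ p * ((a + b) ^ p + (c + d) ^ p) := h1
    _ ≤ 2 ^ p * (2 ^ p * (a ^ p + b ^ p) + 2 ^ p * (c ^ p + d ^ p)) := by nlinarith
    _ = 4 ^ p * (a ^ p + b ^ p + c ^ p + d ^ p) := by rw [← h44]; ring

section ConstructionBounds

variable (lam : ℤ → ℝ) (f : ℤ → ℂ)

lemma c3_mul_bound (hs : StrictMono lam) (n : ℤ) :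
    (lam (n + 1) - lam n) * ‖c3v lam f n‖ ≤
      ‖dd2 lam f (n - 1)‖ + ‖dd2 lam f n‖ := by
  have hpos : 0 < lam (n + 1) - lam n := sub_pos.2 (hs (by omega))
  rw [c3v, norm_div, norm_ofReal_cast, abs_of_nonneg hpos.le]
  rw [mul_div_cancel₀ _ hpos.ne']
  calc ‖dd2 lam f n - dd2 lam f (n - 1)‖ ≤ ‖dd2 lam f n‖ + ‖dd2 lam f (n - 1)‖ :=
        norm_sub_le _ _
    _ = ‖dd2 lam f (n - 1)‖ + ‖dd2 lam f n‖ := by ring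

lemma c2_bound (n : ℤ) :
    ‖c2v lam f n‖ ≤ 2 * ‖dd2 lam f (n - 1)‖ + ‖dd2 lam f n‖ := by
  rw [c2v]
  calc ‖2 * dd2 lam f (n - 1) - dd2 lam f n‖
      ≤ ‖2 * dd2 lam f (n - 1)‖ + ‖dd2 lam f n‖ := norm_sub_le _ _
    _ ≤ 2 * ‖dd2 lam f (n - 1)‖ + ‖dd2 lam f n‖ := by
        rw [norm_mul]
        simp

lemma alpha_bound (hs : StrictMono lam) (n : ℤ) :
    ‖alphaN lam f n‖ ≤ ‖dd1 lam f n‖ + (lam (n + 1) - lam n) * ‖dd2 lam f (n - 1)‖ := by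
  have hpos : 0 < lam (n + 1) - lam n := sub_pos.2 (hs (by omega))
  rw [key1 lam f hs n]
  refine (norm_sub_le _ _).trans ?_
  rw [norm_mul, norm_ofReal_cast, abs_of_nonneg hpos.le]

lemma Fc_sup (hg : GoodSeq lam) (n : ℤ) {x : ℝ} (hx : x ∈ Ico (lam n) (lam (n + 1))) :
    ‖Fc lam f hg x‖ ≤ ‖f n‖ + (lam (n + 1) - lam n) * ‖dd1 lam f n‖ +
      4 * (lam (n + 1) - lam n) ^ 2 * ‖dd2 lam f (n - 1)‖ +
      2 * (lam (n + 1) - lam n) ^ 2 * ‖dd2 lam f n‖ := by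
  have hFx : Fc lam f hg x = Pf lam f n x := by
    unfold Fc; rw [idx_eq lam hg hx.1 hx.2]
  set h := lam (n + 1) - lam n with hh
  have hhpos : 0 < h := sub_pos.2 (hg.1 (by omega))
  set d := x - lam n with hd
  have hd0 : 0 ≤ d := sub_nonneg.2 hx.1
  have hdh : d ≤ h := by rw [hd, hh]; linarith [hx.2]
  have hXnorm : ‖((x - lam n : ℝ) : ℂ)‖ = d := by
    rw [norm_ofReal_cast, ← hd, abs_of_nonneg hd0]
  set A := ‖dd2 lam f (n - 1)‖ with hA
  set B := ‖dd2 lam f n‖ with hB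
  have hA0 : 0 ≤ A := norm_nonneg _
  have hB0 : 0 ≤ B := norm_nonneg _
  have halpha := alpha_bound lam f hg.1 n
  have hc2 := c2_bound lam f n
  have hc3 := c3_mul_bound lam f hg.1 n
  have hal0 : 0 ≤ ‖alphaN lam f n‖ := norm_nonneg _
  have hc20 : 0 ≤ ‖c2v lam f n‖ := norm_nonneg _
  have hc30 : 0 ≤ ‖c3v lam f n‖ := norm_nonneg _
  have hd10 : 0 ≤ ‖dd1 lam f n‖ := norm_nonneg _
  have t1 : ‖alphaN lam f n * ((x - lam n : ℝ) : ℂ)‖ ≤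
      h * ‖dd1 lam f n‖ + h ^ 2 * A := by
    rw [norm_mul, hXnorm]
    calc ‖alphaN lam f n‖ * d ≤ (‖dd1 lam f n‖ + h * A) * h := by
          apply mul_le_mul halpha hdh hd0
          positivity
      _ = h * ‖dd1 lam f n‖ + h ^ 2 * A := by ring
  have t2 : ‖c2v lam f n * (((x - lam n : ℝ) : ℂ) * ((x - lam n : ℝ) : ℂ))‖ ≤
      (2 * A + B) * h ^ 2 := by
    rw [norm_mul, norm_mul, hXnorm]
    have hdd : d * d ≤ h ^ 2 := by nlinarith
    exact mul_le_mul hc2 hdd (by positivity) (by positivity)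
  have t3 : ‖c3v lam f n * (((x - lam n : ℝ) : ℂ) * ((x - lam n : ℝ) : ℂ) *
      ((x - lam n : ℝ) : ℂ))‖ ≤ (A + B) * h ^ 2 := by
    rw [norm_mul, norm_mul, norm_mul, hXnorm]
    have hd3 : d * d * d ≤ h * h * h := by
      nlinarith [mul_nonneg (sub_nonneg.2 hdh) (add_nonneg (add_nonneg
        (mul_nonneg hhpos.le hhpos.le) (mul_nonneg hhpos.le hd0)) (mul_nonneg hd0 hd0))]
    calc ‖c3v lam f n‖ * (d * d * d) ≤ ‖c3v lam f n‖ * (h * h * h) := by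
          apply mul_le_mul_of_nonneg_left hd3 hc30
      _ = (h * ‖c3v lam f n‖) * (h * h) := by ring
      _ ≤ (A + B) * (h * h) := by
          apply mul_le_mul_of_nonneg_right hc3 (by positivity)
      _ = (A + B) * h ^ 2 := by ring
  rw [hFx, Pf]
  calc ‖f n + alphaN lam f n * ((x - lam n : ℝ) : ℂ) +
        c2v lam f n * (((x - lam n : ℝ) : ℂ) * ((x - lam n : ℝ) : ℂ)) +
        c3v lam f n * (((x - lam n : ℝ) : ℂ) * ((x - lam n : ℝ) : ℂ) *
          ((x - lam n : ℝ) : ℂ))‖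
      ≤ ‖f n + alphaN lam f n * ((x - lam n : ℝ) : ℂ) +
          c2v lam f n * (((x - lam n : ℝ) : ℂ) * ((x - lam n : ℝ) : ℂ))‖ +
        ‖c3v lam f n * (((x - lam n : ℝ) : ℂ) * ((x - lam n : ℝ) : ℂ) *
          ((x - lam n : ℝ) : ℂ))‖ := norm_add_le _ _
    _ ≤ ‖f n + alphaN lam f n * ((x - lam n : ℝ) : ℂ)‖ +
        ‖c2v lam f n * (((x - lam n : ℝ) : ℂ) * ((x - lam n : ℝ) : ℂ))‖ +
        ‖c3v lam f n * (((x - lam n : ℝ) : ℂ) * ((x - lam n : ℝ) : ℂ) *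
          ((x - lam n : ℝ) : ℂ))‖ := by
        gcongr
        exact norm_add_le _ _
    _ ≤ (‖f n‖ + ‖alphaN lam f n * ((x - lam n : ℝ) : ℂ)‖) +
        ‖c2v lam f n * (((x - lam n : ℝ) : ℂ) * ((x - lam n : ℝ) : ℂ))‖ +
        ‖c3v lam f n * (((x - lam n : ℝ) : ℂ) * ((x - lam n : ℝ) : ℂ) *
          ((x - lam n : ℝ) : ℂ))‖ := by
        gcongr
        exact norm_add_le _ _
    _ ≤ ‖f n‖ + h * ‖dd1 lam f n‖ + 4 * h ^ 2 * A + 2 * h ^ 2 * B := by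
        have := t1; have := t2; have := t3
        nlinarith [sq_nonneg h]

lemma Gc_sup (hg : GoodSeq lam) (n : ℤ) {x : ℝ} (hx : x ∈ Ico (lam n) (lam (n + 1))) :
    ‖Gc lam f hg x‖ ≤ 10 * (‖dd2 lam f (n - 1)‖ + ‖dd2 lam f n‖) := by
  have hGx : Gc lam f hg x = Qf lam f n x := by
    unfold Gc; rw [idx_eq lam hg hx.1 hx.2]
  set h := lam (n + 1) - lam n with hh
  have hhpos : 0 < h := sub_pos.2 (hg.1 (by omega))
  set d := x - lam n with hd
  have hd0 : 0 ≤ d := sub_nonneg.2 hx.1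
  have hdh : d ≤ h := by rw [hd, hh]; linarith [hx.2]
  have hXnorm : ‖((x - lam n : ℝ) : ℂ)‖ = d := by
    rw [norm_ofReal_cast, ← hd, abs_of_nonneg hd0]
  set A := ‖dd2 lam f (n - 1)‖ with hA
  set B := ‖dd2 lam f n‖ with hB
  have hA0 : 0 ≤ A := norm_nonneg _
  have hB0 : 0 ≤ B := norm_nonneg _
  have hc2 := c2_bound lam f n
  have hc3 := c3_mul_bound lam f hg.1 n
  have hc30 : 0 ≤ ‖c3v lam f n‖ := norm_nonneg _
  have t2 : ‖6 * c3v lam f n * ((x - lam n : ℝ) : ℂ)‖ ≤ 6 * (A + B) := by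
    rw [norm_mul, norm_mul, hXnorm]
    have h6 : ‖(6 : ℂ)‖ = 6 := by simp
    rw [h6]
    have : ‖c3v lam f n‖ * d ≤ ‖c3v lam f n‖ * h := mul_le_mul_of_nonneg_left hdh hc30
    have h2 : ‖c3v lam f n‖ * h ≤ A + B := by
      calc ‖c3v lam f n‖ * h = h * ‖c3v lam f n‖ := by ring
        _ ≤ A + B := hc3
    calc 6 * ‖c3v lam f n‖ * d ≤ 6 * (‖c3v lam f n‖ * h) := by nlinarith
      _ ≤ 6 * (A + B) := by nlinarith
  have t1 : ‖2 * c2v lam f n‖ ≤ 2 * (2 * A + B) := by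
    rw [norm_mul]
    have h2 : ‖(2 : ℂ)‖ = 2 := by simp
    rw [h2]
    nlinarith [norm_nonneg (c2v lam f n)]
  rw [hGx, Qf]
  calc ‖2 * c2v lam f n + 6 * c3v lam f n * ((x - lam n : ℝ) : ℂ)‖
      ≤ ‖2 * c2v lam f n‖ + ‖6 * c3v lam f n * ((x - lam n : ℝ) : ℂ)‖ := norm_add_le _ _
    _ ≤ 2 * (2 * A + B) + 6 * (A + B) := add_le_add t1 t2
    _ ≤ 10 * (A + B) := by nlinarith

lemma piece_bound {φ : ℝ → ℂ} {M a b : ℝ} (hab : a ≤ b) (hM : 0 ≤ M)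
    {p : ℝ} (hp : 1 ≤ p) (hb : ∀ x ∈ Ico a b, ‖φ x‖ ≤ M) :
    ∫⁻ t in Ico a b, ENNReal.ofReal (‖φ t‖ ^ p) ≤ ENNReal.ofReal ((b - a) * M ^ p) := by
  calc ∫⁻ t in Ico a b, ENNReal.ofReal (‖φ t‖ ^ p)
      ≤ ∫⁻ _ in Ico a b, ENNReal.ofReal (M ^ p) := by
        apply setLIntegral_mono measurable_const
        intro x hx
        exact ENNReal.ofReal_le_ofReal (rpow_base_le hp (norm_nonneg _) (hb x hx))
    _ = ENNReal.ofReal (M ^ p) * volume (Ico a b) := setLIntegral_const _ _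
    _ = ENNReal.ofReal ((b - a) * M ^ p) := by
        rw [Real.volume_Ico, ← ENNReal.ofReal_mul (Real.rpow_nonneg hM p), mul_comm]

lemma lintegral_partition (hg : GoodSeq lam) (φ : ℝ → ℝ≥0∞) :
    ∫⁻ t, φ t = ∑' n : ℤ, ∫⁻ t in Ico (lam n) (lam (n + 1)), φ t := by
  have hmeas : ∀ n : ℤ, MeasurableSet (Ico (lam n) (lam (n + 1))) := fun n =>
    measurableSet_Ico
  have hdisj : Pairwise (Function.onFun Disjoint fun n : ℤ => Ico (lam n) (lam (n + 1))) := by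
    intro m n hmn
    simp only [Function.onFun]
    rw [Set.Ico_disjoint_Ico]
    rcases lt_or_gt_of_ne hmn with h | h
    · calc min (lam (m + 1)) (lam (n + 1)) ≤ lam (m + 1) := min_le_left _ _
        _ ≤ lam n := hg.1.monotone (by omega)
        _ ≤ max (lam m) (lam n) := le_max_right _ _
    · calc min (lam (m + 1)) (lam (n + 1)) ≤ lam (n + 1) := min_le_right _ _
        _ ≤ lam m := hg.1.monotone (by omega)
        _ ≤ max (lam m) (lam n) := le_max_left _ _
  have hunion : (⋃ n : ℤ, Ico (lam n) (lam (n + 1))) = univ := by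
    ext x
    simp only [mem_iUnion, mem_Ico, mem_univ, iff_true]
    exact exists_idx lam hg x
  calc ∫⁻ t, φ t = ∫⁻ t in ⋃ n : ℤ, Ico (lam n) (lam (n + 1)), φ t := by
        rw [hunion, Measure.restrict_univ]
    _ = ∑' n : ℤ, ∫⁻ t in Ico (lam n) (lam (n + 1)), φ t := lintegral_iUnion hmeas hdisj φ

lemma lint_Icc_split (hs : StrictMono lam) (n : ℤ) (φ : ℝ → ℝ≥0∞) :
    ∫⁻ t in Icc (lam n) (lam (n + 2)), φ t =
      (∫⁻ t in Ico (lam n) (lam (n + 1)), φ t) +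
        ∫⁻ t in Ico (lam (n + 1)) (lam (n + 2)), φ t := by
  have h1 : lam n ≤ lam (n + 1) := (hs (by omega : n < n + 1)).le
  have h2 : lam (n + 1) ≤ lam (n + 2) := (hs (by omega : n + 1 < n + 2)).le
  have hae : ∫⁻ t in Icc (lam n) (lam (n + 2)), φ t =
      ∫⁻ t in Ico (lam n) (lam (n + 2)), φ t :=
    (setLIntegral_congr (Ico_ae_eq_Icc (μ := volume))).symm
  rw [hae, ← Ico_union_Ico_eq_Ico h1 h2]
  apply lintegral_union measurableSet_Ico
  rw [Set.Ico_disjoint_Ico]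
  calc min (lam (n + 1)) (lam (n + 2)) ≤ lam (n + 1) := min_le_left _ _
    _ ≤ max (lam n) (lam (n + 1)) := le_max_right _ _

end ConstructionBounds
end Stmt5Aux
namespace Stmt5Aux
open MeasureTheory Set intervalIntegral Filter
open scoped ENNReal NNReal

section Helpers

lemma two_le_two_rpow {p : ℝ} (hp : 1 ≤ p) : (2:ℝ) ≤ 2 ^ p := by
  calc (2:ℝ) = 2 ^ (1:ℝ) := (Real.rpow_one 2).symm
    _ ≤ 2 ^ p := Real.rpow_le_rpow_of_exponent_le (by norm_num) hp

lemma en_base_mono {β γ p : ℝ} (h : β ≤ γ) (hp : 0 ≤ p) :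
    (ENNReal.ofReal β) ^ p ≤ (ENNReal.ofReal γ) ^ p :=
  ENNReal.rpow_le_rpow (ENNReal.ofReal_le_ofReal h) hp

lemma en_ofReal_rpow {β p : ℝ} (hβ : 0 ≤ β) (hp : 0 < p) :
    ENNReal.ofReal (β ^ p) = (ENNReal.ofReal β) ^ p :=
  (ENNReal.ofReal_rpow_of_nonneg hβ hp.le).symm

lemma en_two_combine {β γ p : ℝ} (hβ : 0 ≤ β) (hγ : 0 ≤ γ) (hp : 1 ≤ p) :
    (ENNReal.ofReal β) ^ p + (ENNReal.ofReal γ) ^ p ≤ (ENNReal.ofReal (β + γ)) ^ p := by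
  rw [ENNReal.ofReal_add hβ hγ]
  exact ENNReal.add_rpow_le_rpow_add _ _ hp

lemma en_three_combine {β γ δ p : ℝ} (hβ : 0 ≤ β) (hγ : 0 ≤ γ) (hδ : 0 ≤ δ) (hp : 1 ≤ p) :
    (ENNReal.ofReal β) ^ p + (ENNReal.ofReal γ) ^ p + (ENNReal.ofReal δ) ^ p ≤
      (ENNReal.ofReal (β + γ + δ)) ^ p := by
  calc (ENNReal.ofReal β) ^ p + (ENNReal.ofReal γ) ^ p + (ENNReal.ofReal δ) ^ p
      ≤ (ENNReal.ofReal (β + γ)) ^ p + (ENNReal.ofReal δ) ^ p := by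
        gcongr
        exact en_two_combine hβ hγ hp
    _ ≤ (ENNReal.ofReal (β + γ + δ)) ^ p := en_two_combine (by linarith) hδ hp

lemma en_two_mul_coef {β p : ℝ} (hβ : 0 ≤ β) (hp : 1 ≤ p) (x : ℝ≥0∞) :
    2 * ((ENNReal.ofReal β) ^ p * x) ≤ (ENNReal.ofReal (2 * β)) ^ p * x := by
  have h2 : (2:ℝ≥0∞) ≤ (ENNReal.ofReal 2) ^ p := by
    rw [← en_ofReal_rpow (by norm_num) (by linarith : (0:ℝ) < p)]
    calc (2:ℝ≥0∞) = ENNReal.ofReal 2 := by norm_num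
      _ ≤ ENNReal.ofReal (2 ^ p) := ENNReal.ofReal_le_ofReal (two_le_two_rpow hp)
  calc 2 * ((ENNReal.ofReal β) ^ p * x)
      ≤ (ENNReal.ofReal 2) ^ p * ((ENNReal.ofReal β) ^ p * x) := by
        exact mul_le_mul_left h2 _
    _ = ((ENNReal.ofReal 2) ^ p * (ENNReal.ofReal β) ^ p) * x := by ring
    _ = (ENNReal.ofReal (2 * β)) ^ p * x := by
        rw [ENNReal.ofReal_mul (by norm_num : (0:ℝ) ≤ 2),
          ENNReal.mul_rpow_of_nonneg _ _ (by linarith : (0:ℝ) ≤ p)]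

lemma pack1 {H w p : ℝ} (hH : 0 < H) {Zn : ℝ≥0∞}
    (hbr : ENNReal.ofReal (w ^ p) ≤ ENNReal.ofReal (H ^ (p - 1)) * Zn) :
    ENNReal.ofReal (H ^ (1 - p) * w ^ p) ≤ Zn := by
  calc ENNReal.ofReal (H ^ (1 - p) * w ^ p)
      = ENNReal.ofReal (H ^ (1 - p)) * ENNReal.ofReal (w ^ p) :=
        ENNReal.ofReal_mul (Real.rpow_nonneg hH.le _)
    _ ≤ ENNReal.ofReal (H ^ (1 - p)) * (ENNReal.ofReal (H ^ (p - 1)) * Zn) :=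
        mul_le_mul_right hbr _
    _ = (ENNReal.ofReal (H ^ (1 - p)) * ENNReal.ofReal (H ^ (p - 1))) * Zn := by ring
    _ = Zn := by
        rw [← ENNReal.ofReal_mul (Real.rpow_nonneg hH.le _), ← Real.rpow_add hH]
        norm_num

/-- The core per-interval packing estimate for the lower bound. -/
lemma core_pack {H v fI gI β1 β2 p : ℝ} {Xn Yn : ℝ≥0∞} (hH : 0 < H) (hp : 1 ≤ p)
    (hv : 0 ≤ v) (hfI : 0 ≤ fI) (hgI : 0 ≤ gI) (hβ1 : 0 ≤ β1) (hβ2 : 0 ≤ β2)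
    (hBX : ENNReal.ofReal (fI ^ p) ≤ ENNReal.ofReal (H ^ (p - 1)) * Xn)
    (hBY : ENNReal.ofReal (gI ^ p) ≤ ENNReal.ofReal (H ^ (p - 1)) * Yn)
    (hmain : H ^ 2 * v ≤ β1 * fI + β2 * gI) :
    ENNReal.ofReal (H ^ (1 - p) * (H ^ 2 * v) ^ p) ≤
      (ENNReal.ofReal (2 * β1)) ^ p * Xn + (ENNReal.ofReal (2 * β2)) ^ p * Yn := by
  have hp0 : (0:ℝ) < p := by linarith
  have hH2v : 0 ≤ H ^ 2 * v := by positivity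
  have step1 : (H ^ 2 * v) ^ p ≤ 2 ^ p * ((β1 * fI) ^ p + (β2 * gI) ^ p) := by
    calc (H ^ 2 * v) ^ p ≤ (β1 * fI + β2 * gI) ^ p :=
          Real.rpow_le_rpow hH2v hmain hp0.le
      _ ≤ 2 ^ p * ((β1 * fI) ^ p + (β2 * gI) ^ p) :=
          two_term hp (by positivity) (by positivity)
  have step2 : H ^ (1 - p) * (H ^ 2 * v) ^ p ≤
      (2 * β1) ^ p * (H ^ (1 - p) * fI ^ p) + (2 * β2) ^ p * (H ^ (1 - p) * gI ^ p) := by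
    have hHp : 0 ≤ H ^ (1 - p) := Real.rpow_nonneg hH.le _
    have e1 : (β1 * fI) ^ p = β1 ^ p * fI ^ p := Real.mul_rpow hβ1 hfI
    have e2 : (β2 * gI) ^ p = β2 ^ p * gI ^ p := Real.mul_rpow hβ2 hgI
    have e3 : (2 * β1) ^ p = 2 ^ p * β1 ^ p := Real.mul_rpow (by norm_num) hβ1
    have e4 : (2 * β2) ^ p = 2 ^ p * β2 ^ p := Real.mul_rpow (by norm_num) hβ2
    calc H ^ (1 - p) * (H ^ 2 * v) ^ p
        ≤ H ^ (1 - p) * (2 ^ p * ((β1 * fI) ^ p + (β2 * gI) ^ p)) :=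
          mul_le_mul_of_nonneg_left step1 hHp
      _ = (2 * β1) ^ p * (H ^ (1 - p) * fI ^ p) + (2 * β2) ^ p * (H ^ (1 - p) * gI ^ p) := by
          rw [e1, e2, e3, e4]; ring
  calc ENNReal.ofReal (H ^ (1 - p) * (H ^ 2 * v) ^ p)
      ≤ ENNReal.ofReal ((2 * β1) ^ p * (H ^ (1 - p) * fI ^ p) +
          (2 * β2) ^ p * (H ^ (1 - p) * gI ^ p)) := ENNReal.ofReal_le_ofReal step2
    _ ≤ ENNReal.ofReal ((2 * β1) ^ p * (H ^ (1 - p) * fI ^ p)) +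
        ENNReal.ofReal ((2 * β2) ^ p * (H ^ (1 - p) * gI ^ p)) := ENNReal.ofReal_add_le
    _ ≤ (ENNReal.ofReal (2 * β1)) ^ p * Xn + (ENNReal.ofReal (2 * β2)) ^ p * Yn := by
        gcongr
        · calc ENNReal.ofReal ((2 * β1) ^ p * (H ^ (1 - p) * fI ^ p))
              = ENNReal.ofReal ((2 * β1) ^ p) *
                  ENNReal.ofReal (H ^ (1 - p) * fI ^ p) :=
                ENNReal.ofReal_mul (Real.rpow_nonneg (by linarith) _)
            _ ≤ ENNReal.ofReal ((2 * β1) ^ p) * Xn :=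
                mul_le_mul_right (pack1 hH hBX) _
            _ = (ENNReal.ofReal (2 * β1)) ^ p * Xn := by
                rw [en_ofReal_rpow (by linarith) hp0]
        · calc ENNReal.ofReal ((2 * β2) ^ p * (H ^ (1 - p) * gI ^ p))
              = ENNReal.ofReal ((2 * β2) ^ p) *
                  ENNReal.ofReal (H ^ (1 - p) * gI ^ p) :=
                ENNReal.ofReal_mul (Real.rpow_nonneg (by linarith) _)
            _ ≤ ENNReal.ofReal ((2 * β2) ^ p) * Yn :=
                mul_le_mul_right (pack1 hH hBY) _
            _ = (ENNReal.ofReal (2 * β2)) ^ p * Yn := by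
                rw [en_ofReal_rpow (by linarith) hp0]

lemma idA {H x p : ℝ} (hH : 0 < H) (hx : 0 ≤ x) :
    H * x ^ p = H ^ (1 - p) * (H * x) ^ p := by
  have h1 : (1 - p) + p = 1 := by ring
  rw [Real.mul_rpow hH.le hx, ← mul_assoc, ← Real.rpow_add hH, h1, Real.rpow_one]

lemma idB {H x p : ℝ} (hH : 0 < H) (hx : 0 ≤ x) :
    H ^ (p + 1) * x ^ p = H ^ (1 - p) * (H ^ 2 * x) ^ p := by
  have h2 : ((H:ℝ) ^ (2:ℕ)) ^ p = H ^ (2 * p) := by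
    rw [← Real.rpow_natCast H 2, ← Real.rpow_mul hH.le]
    norm_num
  have h3 : (1 - p) + 2 * p = p + 1 := by ring
  rw [Real.mul_rpow (by positivity) hx, h2, ← mul_assoc, ← Real.rpow_add hH, h3]

lemma slope_close {F G : ℝ → ℂ} (hF : ContDiff ℝ 1 F)
    (hFTC : ∀ a b : ℝ, a ≤ b → deriv F b - deriv F a = ∫ t in a..b, G t)
    (hG : LocallyIntegrable G volume) {a b x y m : ℝ}
    (hax : a ≤ x) (hxy : x < y) (hyb : y ≤ b) (hm : m ∈ Icc a b) :
    ‖(F y - F x) / ((y - x : ℝ) : ℂ) - deriv F m‖ ≤ ∫ t in a..b, ‖G t‖ := by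
  have h := avg_est hF hFTC hG hax hxy.le hyb hm
  have hpos : (0:ℝ) < y - x := by linarith
  have hne : ((y - x : ℝ) : ℂ) ≠ 0 := Complex.ofReal_ne_zero.mpr hpos.ne'
  have hne2 : (y : ℂ) - (x : ℂ) ≠ 0 := by
    rw [← Complex.ofReal_sub]; exact hne
  have key : (F y - F x) / ((y - x : ℝ) : ℂ) - deriv F m =
      ((F y - F x) - ((y - x : ℝ) : ℂ) * deriv F m) / ((y - x : ℝ) : ℂ) := by
    push_cast
    field_simp
  rw [key, norm_div, norm_ofReal_cast, abs_of_pos hpos, div_le_iff₀ hpos]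
  calc ‖F y - F x - ((y - x : ℝ) : ℂ) * deriv F m‖ ≤ (y - x) * ∫ t in a..b, ‖G t‖ := h
    _ = (∫ t in a..b, ‖G t‖) * (y - x) := by ring

end Helpers
end Stmt5Aux
namespace Stmt5Aux
open MeasureTheory Set intervalIntegral Filter
open scoped ENNReal NNReal

section LowerMain

variable {K p : ℝ} {lam : ℤ → ℝ} {f : ℤ → ℂ} {F G : ℝ → ℂ}

lemma lower_per_n (hK : 0 < K) (hp : 1 ≤ p) (hg : GoodSeq lam)
    (hKs : ∀ n : ℤ, lam (n + 1) - lam n ≤ K)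
    (hF : ContDiff ℝ 1 F)
    (hFTC : ∀ a b : ℝ, a ≤ b → deriv F b - deriv F a = ∫ t in a..b, G t)
    (hG : LocallyIntegrable G volume)
    (hint : ∀ n : ℤ, F (lam n) = f n) (n : ℤ) :
    ENNReal.ofReal ((lam (n + 2) - lam n) * ‖dd2 lam f n‖ ^ p) ≤
        (ENNReal.ofReal 4) ^ p *
          (∫⁻ t in Icc (lam n) (lam (n + 2)), ENNReal.ofReal (‖G t‖ ^ p)) ∧
      ENNReal.ofReal ((lam (n + 2) - lam n) * ‖f n‖ ^ p) ≤
        (ENNReal.ofReal 8) ^ p *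
            (∫⁻ t in Icc (lam n) (lam (n + 2)), ENNReal.ofReal (‖F t‖ ^ p)) +
          (ENNReal.ofReal (32 * K ^ 2)) ^ p *
            (∫⁻ t in Icc (lam n) (lam (n + 2)), ENNReal.ofReal (‖G t‖ ^ p)) ∧
      ENNReal.ofReal ((lam (n + 2) - lam n) ^ (p + 1) * ‖dd1 lam f n‖ ^ p) ≤
        (ENNReal.ofReal 16) ^ p *
            (∫⁻ t in Icc (lam n) (lam (n + 2)), ENNReal.ofReal (‖F t‖ ^ p)) +
          (ENNReal.ofReal (80 * K ^ 2)) ^ p *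
            (∫⁻ t in Icc (lam n) (lam (n + 2)), ENNReal.ofReal (‖G t‖ ^ p)) := by
  have hp0 : (0:ℝ) < p := by linarith
  set a := lam n with ha
  set m := lam (n + 1) with hm
  set b := lam (n + 2) with hb
  have ham : a < m := hg.1 (by omega)
  have hmb : m < b := hg.1 (by omega)
  have hab : a < b := ham.trans hmb
  set H := b - a with hH
  have hHpos : 0 < H := by rw [hH]; linarith
  have hH2K : H ≤ 2 * K := by
    have h1 : m - a ≤ K := hKs n
    have h2 : b - m ≤ K := by
      have := hKs (n + 1)
      rwa [show n + 1 + 1 = n + 2 by ring] at this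
    rw [hH]; linarith
  have hHK2 : H ^ 2 ≤ 4 * K ^ 2 := by nlinarith
  set gI := ∫ t in a..b, ‖G t‖ with hgI
  set fI := ∫ t in a..b, ‖F t‖ with hfI
  have hgI0 : 0 ≤ gI := intervalIntegral.integral_nonneg hab.le fun t _ => norm_nonneg _
  have hfI0 : 0 ≤ fI := intervalIntegral.integral_nonneg hab.le fun t _ => norm_nonneg _
  set Xn := ∫⁻ t in Icc a b, ENNReal.ofReal (‖F t‖ ^ p) with hXn
  set Yn := ∫⁻ t in Icc a b, ENNReal.ofReal (‖G t‖ ^ p) with hYn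
  have BX : ENNReal.ofReal (fI ^ p) ≤ ENNReal.ofReal (H ^ (p - 1)) * Xn := by
    rw [hfI, hXn, hH]
    exact holder_bridge hp hab (fun t => norm_nonneg (F t))
      (hF.continuous.norm.integrableOn_Icc)
  have BY : ENNReal.ofReal (gI ^ p) ≤ ENNReal.ofReal (H ^ (p - 1)) * Yn := by
    rw [hgI, hYn, hH]
    exact holder_bridge hp hab (fun t => norm_nonneg (G t))
      ((hG.integrableOn_isCompact isCompact_Icc).norm)
  -- endpoint estimates
  have E1 : ‖F a‖ ≤ 4 / H * fI + 4 * H * gI := by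
    have h := endpoint_left hF hFTC hG hab
    rw [← hgI, ← hfI, ← hH] at h
    linarith
  have E2 : ‖F b‖ ≤ 4 / H * fI + 4 * H * gI := by
    have h := endpoint_right hF hFTC hG hab
    rw [← hgI, ← hfI, ← hH] at h
    linarith
  have hHe : H * (4 / H * fI + 4 * H * gI) = 4 * fI + 4 * H ^ 2 * gI := by
    field_simp
  have E1' : H * ‖F a‖ ≤ 4 * fI + 4 * H ^ 2 * gI := by
    have h := mul_le_mul_of_nonneg_left E1 hHpos.le
    rw [hHe] at h
    exact h
  have E2' : H * ‖F b‖ ≤ 4 * fI + 4 * H ^ 2 * gI := by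
    have h := mul_le_mul_of_nonneg_left E2 hHpos.le
    rw [hHe] at h
    exact h
  -- slope estimates
  have hd1 : dd1 lam f n = (F m - F a) / ((m - a : ℝ) : ℂ) := by
    rw [dd1, hint, hint]
  have hd2 : dd1 lam f (n + 1) = (F b - F m) / ((b - m : ℝ) : ℂ) := by
    have e : n + 1 + 1 = n + 2 := by ring
    rw [dd1, e, hint, hint]
  have hmIcc : m ∈ Icc a b := ⟨ham.le, hmb.le⟩
  have haIcc : a ∈ Icc a b := left_mem_Icc.2 hab.le
  have s1 : ‖dd1 lam f n - deriv F m‖ ≤ gI := by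
    rw [hd1]; exact slope_close hF hFTC hG le_rfl ham hmb.le hmIcc
  have s2 : ‖dd1 lam f (n + 1) - deriv F m‖ ≤ gI := by
    rw [hd2]; exact slope_close hF hFTC hG ham.le hmb le_rfl hmIcc
  have s3 : ‖dd1 lam f n - deriv F a‖ ≤ gI := by
    rw [hd1]; exact slope_close hF hFTC hG le_rfl ham hmb.le haIcc
  have s4 : ‖(F b - F a) / ((H : ℝ) : ℂ) - deriv F a‖ ≤ gI := by
    rw [hH]; exact slope_close hF hFTC hG le_rfl hab le_rfl haIcc
  -- dd2 bound
  have hdd2 : dd2 lam f n = (dd1 lam f (n + 1) - dd1 lam f n) / ((H : ℝ) : ℂ) := by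
    rw [dd2, hH]
  have E3 : H * ‖dd2 lam f n‖ ≤ 2 * gI := by
    rw [hdd2, norm_div, norm_ofReal_cast, abs_of_pos hHpos]
    rw [mul_div_cancel₀ _ hHpos.ne']
    have tri : dd1 lam f (n + 1) - dd1 lam f n =
        (dd1 lam f (n + 1) - deriv F m) - (dd1 lam f n - deriv F m) := by ring
    rw [tri]
    calc ‖(dd1 lam f (n + 1) - deriv F m) - (dd1 lam f n - deriv F m)‖
        ≤ ‖dd1 lam f (n + 1) - deriv F m‖ + ‖dd1 lam f n - deriv F m‖ := norm_sub_le _ _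
      _ ≤ 2 * gI := by linarith
  -- dd1 bound
  have E4 : H * ‖dd1 lam f n‖ ≤ ‖F a‖ + ‖F b‖ + 2 * H * gI := by
    set Q := (F b - F a) / ((H : ℝ) : ℂ) with hQ
    have hQn : ‖Q‖ ≤ (‖F b‖ + ‖F a‖) / H := by
      rw [hQ, norm_div, norm_ofReal_cast, abs_of_pos hHpos]
      gcongr
      exact norm_sub_le _ _
    have tri : ‖dd1 lam f n‖ ≤ ‖dd1 lam f n - deriv F a‖ + ‖Q - deriv F a‖ + ‖Q‖ := by
      have e : dd1 lam f n = (dd1 lam f n - deriv F a) - (Q - deriv F a) + Q := by ring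
      calc ‖dd1 lam f n‖ = ‖(dd1 lam f n - deriv F a) - (Q - deriv F a) + Q‖ := by rw [← e]
        _ ≤ ‖(dd1 lam f n - deriv F a) - (Q - deriv F a)‖ + ‖Q‖ := norm_add_le _ _
        _ ≤ ‖dd1 lam f n - deriv F a‖ + ‖Q - deriv F a‖ + ‖Q‖ := by
            have := norm_sub_le (dd1 lam f n - deriv F a) (Q - deriv F a)
            linarith
    have hQH : H * ‖Q‖ ≤ ‖F b‖ + ‖F a‖ := by
      have h := mul_le_mul_of_nonneg_left hQn hHpos.le
      rwa [mul_div_cancel₀ _ hHpos.ne'] at h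
    have h2 := mul_le_mul_of_nonneg_left tri hHpos.le
    have hs3 := mul_le_mul_of_nonneg_left s3 hHpos.le
    have hs4 := mul_le_mul_of_nonneg_left s4 hHpos.le
    nlinarith [hs3, hs4, hQH, h2]
  -- now the three packed estimates
  refine ⟨?_, ?_, ?_⟩
  · -- T1
    have hv : (0:ℝ) ≤ ‖dd2 lam f n‖ / H := by positivity
    have hH2v : H ^ 2 * (‖dd2 lam f n‖ / H) = H * ‖dd2 lam f n‖ := by
      field_simp
    have hmain : H ^ 2 * (‖dd2 lam f n‖ / H) ≤ 0 * fI + 2 * gI := by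
      rw [hH2v]; linarith
    have hcore := core_pack hHpos hp hv hfI0 hgI0 le_rfl (by norm_num) BX BY hmain
    rw [hH2v] at hcore
    calc ENNReal.ofReal (H * ‖dd2 lam f n‖ ^ p)
        = ENNReal.ofReal (H ^ (1 - p) * (H * ‖dd2 lam f n‖) ^ p) := by
          rw [← idA hHpos (norm_nonneg _)]
      _ ≤ (ENNReal.ofReal (2 * 0)) ^ p * Xn + (ENNReal.ofReal (2 * 2)) ^ p * Yn := hcore
      _ = (ENNReal.ofReal 4) ^ p * Yn := by
          norm_num
          rw [ENNReal.zero_rpow_of_pos hp0, zero_mul, zero_add]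
  · -- T2
    have hfa : ‖f n‖ = ‖F a‖ := by rw [← hint n]
    have hv : (0:ℝ) ≤ ‖F a‖ / H := by positivity
    have hH2v : H ^ 2 * (‖F a‖ / H) = H * ‖F a‖ := by
      field_simp
    have hmain : H ^ 2 * (‖F a‖ / H) ≤ 4 * fI + (16 * K ^ 2) * gI := by
      rw [hH2v]
      nlinarith [E1', mul_le_mul_of_nonneg_right hHK2 hgI0]
    have hcore := core_pack hHpos hp hv hfI0 hgI0 (by norm_num) (by positivity) BX BY hmain
    rw [hH2v] at hcore
    calc ENNReal.ofReal (H * ‖f n‖ ^ p)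
        = ENNReal.ofReal (H ^ (1 - p) * (H * ‖F a‖) ^ p) := by
          rw [hfa, ← idA hHpos (norm_nonneg _)]
      _ ≤ (ENNReal.ofReal (2 * 4)) ^ p * Xn + (ENNReal.ofReal (2 * (16 * K ^ 2))) ^ p * Yn :=
          hcore
      _ = (ENNReal.ofReal 8) ^ p * Xn + (ENNReal.ofReal (32 * K ^ 2)) ^ p * Yn := by
          rw [show (2:ℝ) * (16 * K ^ 2) = 32 * K ^ 2 by ring]
          norm_num
  · -- T3
    have hv : (0:ℝ) ≤ ‖dd1 lam f n‖ := norm_nonneg _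
    have hmain : H ^ 2 * ‖dd1 lam f n‖ ≤ 8 * fI + (40 * K ^ 2) * gI := by
      have h1 : H ^ 2 * ‖dd1 lam f n‖ ≤ H * (‖F a‖ + ‖F b‖ + 2 * H * gI) := by
        have := mul_le_mul_of_nonneg_left E4 hHpos.le
        nlinarith [this]
      have h2 : H * (‖F a‖ + ‖F b‖ + 2 * H * gI) =
          H * ‖F a‖ + H * ‖F b‖ + 2 * H ^ 2 * gI := by ring
      have h3 : H ^ 2 * ‖dd1 lam f n‖ ≤ 8 * fI + 10 * H ^ 2 * gI := by
        rw [h2] at h1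
        linarith [E1', E2']
      nlinarith [mul_le_mul_of_nonneg_right hHK2 hgI0]
    have hcore := core_pack hHpos hp hv hfI0 hgI0 (by norm_num) (by positivity) BX BY hmain
    calc ENNReal.ofReal (H ^ (p + 1) * ‖dd1 lam f n‖ ^ p)
        = ENNReal.ofReal (H ^ (1 - p) * (H ^ 2 * ‖dd1 lam f n‖) ^ p) := by
          rw [← idB hHpos (norm_nonneg _)]
      _ ≤ (ENNReal.ofReal (2 * 8)) ^ p * Xn + (ENNReal.ofReal (2 * (40 * K ^ 2))) ^ p * Yn :=
          hcore
      _ = (ENNReal.ofReal 16) ^ p * Xn + (ENNReal.ofReal (80 * K ^ 2)) ^ p * Yn := by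
          rw [show (2:ℝ) * (40 * K ^ 2) = 80 * K ^ 2 by ring]
          norm_num

end LowerMain
end Stmt5Aux
namespace Stmt5Aux
open MeasureTheory Set intervalIntegral Filter
open scoped ENNReal NNReal

section Sums

variable {lam : ℤ → ℝ}

lemma sum_Icc (hg : GoodSeq lam) (φ : ℝ → ℝ≥0∞) :
    ∑' n : ℤ, ∫⁻ t in Icc (lam n) (lam (n + 2)), φ t = 2 * ∫⁻ t, φ t := by
  have hsplit : ∀ n : ℤ, ∫⁻ t in Icc (lam n) (lam (n + 2)), φ t =
      (∫⁻ t in Ico (lam n) (lam (n + 1)), φ t) +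
        ∫⁻ t in Ico (lam (n + 1)) (lam (n + 1 + 1)), φ t := by
    intro n
    rw [lint_Icc_split lam hg.1 n φ, show n + 1 + 1 = n + 2 by ring]
  set u : ℤ → ℝ≥0∞ := fun n => ∫⁻ t in Ico (lam n) (lam (n + 1)), φ t with hu
  calc ∑' n : ℤ, ∫⁻ t in Icc (lam n) (lam (n + 2)), φ t
      = ∑' n : ℤ, (u n + u (n + 1)) := tsum_congr fun n => hsplit n
    _ = (∑' n, u n) + ∑' n : ℤ, u (n + 1) := ENNReal.tsum_add
    _ = (∑' n, u n) + ∑' n, u n := by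
        congr 1
        exact (Equiv.addRight (1:ℤ)).tsum_eq u
    _ = 2 * ∑' n, u n := by rw [two_mul]
    _ = 2 * ∫⁻ t, φ t := by rw [← lintegral_partition lam hg φ]

end Sums

section LowerFull

variable {K p : ℝ} {lam : ℤ → ℝ} {f : ℤ → ℂ} {F G : ℝ → ℂ}

lemma lower_main (hK : 0 < K) (hp : 1 ≤ p) (hg : GoodSeq lam)
    (hKs : ∀ n : ℤ, lam (n + 1) - lam n ≤ K)
    (hF : ContDiff ℝ 1 F)
    (hFTC : ∀ a b : ℝ, a ≤ b → deriv F b - deriv F a = ∫ t in a..b, G t)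
    (hG : LocallyIntegrable G volume)
    (hint : ∀ n : ℤ, F (lam n) = f n) :
    (∑' n : ℤ, ENNReal.ofReal ((lam (n + 2) - lam n) * ‖dd2 lam f n‖ ^ p)) +
      (∑' n : ℤ, ENNReal.ofReal ((lam (n + 2) - lam n) * ‖f n‖ ^ p)) +
      (∑' n : ℤ, ENNReal.ofReal ((lam (n + 2) - lam n) ^ (p + 1) * ‖dd1 lam f n‖ ^ p)) ≤
      (ENNReal.ofReal (600 * (1 + K) ^ 2)) ^ p *
        ((∫⁻ t, ENNReal.ofReal (‖F t‖ ^ p)) + ∫⁻ t, ENNReal.ofReal (‖G t‖ ^ p)) := by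
  have hp0 : (0:ℝ) < p := by linarith
  set X := ∫⁻ t, ENNReal.ofReal (‖F t‖ ^ p) with hX
  set Y := ∫⁻ t, ENNReal.ofReal (‖G t‖ ^ p) with hY
  set Xn : ℤ → ℝ≥0∞ :=
    fun n => ∫⁻ t in Icc (lam n) (lam (n + 2)), ENNReal.ofReal (‖F t‖ ^ p) with hXn
  set Yn : ℤ → ℝ≥0∞ :=
    fun n => ∫⁻ t in Icc (lam n) (lam (n + 2)), ENNReal.ofReal (‖G t‖ ^ p) with hYn
  have hXsum : ∑' n, Xn n = 2 * X := sum_Icc hg _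
  have hYsum : ∑' n, Yn n = 2 * Y := sum_Icc hg _
  have per := fun n => lower_per_n hK hp hg hKs hF hFTC hG hint n
  have b1 : (∑' n : ℤ, ENNReal.ofReal ((lam (n + 2) - lam n) * ‖dd2 lam f n‖ ^ p)) ≤
      (ENNReal.ofReal 4) ^ p * (2 * Y) := by
    calc (∑' n : ℤ, ENNReal.ofReal ((lam (n + 2) - lam n) * ‖dd2 lam f n‖ ^ p))
        ≤ ∑' n : ℤ, (ENNReal.ofReal 4) ^ p * Yn n :=
          ENNReal.tsum_le_tsum fun n => (per n).1
      _ = (ENNReal.ofReal 4) ^ p * (2 * Y) := by rw [ENNReal.tsum_mul_left, hYsum]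
  have b2 : (∑' n : ℤ, ENNReal.ofReal ((lam (n + 2) - lam n) * ‖f n‖ ^ p)) ≤
      (ENNReal.ofReal 8) ^ p * (2 * X) + (ENNReal.ofReal (32 * K ^ 2)) ^ p * (2 * Y) := by
    calc (∑' n : ℤ, ENNReal.ofReal ((lam (n + 2) - lam n) * ‖f n‖ ^ p))
        ≤ ∑' n : ℤ, ((ENNReal.ofReal 8) ^ p * Xn n +
            (ENNReal.ofReal (32 * K ^ 2)) ^ p * Yn n) :=
          ENNReal.tsum_le_tsum fun n => (per n).2.1
      _ = (ENNReal.ofReal 8) ^ p * (2 * X) + (ENNReal.ofReal (32 * K ^ 2)) ^ p * (2 * Y) := by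
          rw [ENNReal.tsum_add, ENNReal.tsum_mul_left, ENNReal.tsum_mul_left, hXsum, hYsum]
  have b3 : (∑' n : ℤ, ENNReal.ofReal ((lam (n + 2) - lam n) ^ (p + 1) *
      ‖dd1 lam f n‖ ^ p)) ≤
      (ENNReal.ofReal 16) ^ p * (2 * X) + (ENNReal.ofReal (80 * K ^ 2)) ^ p * (2 * Y) := by
    calc (∑' n : ℤ, ENNReal.ofReal ((lam (n + 2) - lam n) ^ (p + 1) * ‖dd1 lam f n‖ ^ p))
        ≤ ∑' n : ℤ, ((ENNReal.ofReal 16) ^ p * Xn n +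
            (ENNReal.ofReal (80 * K ^ 2)) ^ p * Yn n) :=
          ENNReal.tsum_le_tsum fun n => (per n).2.2
      _ = (ENNReal.ofReal 16) ^ p * (2 * X) + (ENNReal.ofReal (80 * K ^ 2)) ^ p * (2 * Y) := by
          rw [ENNReal.tsum_add, ENNReal.tsum_mul_left, ENNReal.tsum_mul_left, hXsum, hYsum]
  -- absorb the factors of 2
  have c1 : (ENNReal.ofReal 4) ^ p * (2 * Y) ≤ (ENNReal.ofReal 8) ^ p * Y := by
    have := en_two_mul_coef (by norm_num : (0:ℝ) ≤ 4) hp Y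
    calc (ENNReal.ofReal 4) ^ p * (2 * Y) = 2 * ((ENNReal.ofReal 4) ^ p * Y) := by ring
      _ ≤ (ENNReal.ofReal (2 * 4)) ^ p * Y := this
      _ = (ENNReal.ofReal 8) ^ p * Y := by norm_num
  have c2X : (ENNReal.ofReal 8) ^ p * (2 * X) ≤ (ENNReal.ofReal 16) ^ p * X := by
    have := en_two_mul_coef (by norm_num : (0:ℝ) ≤ 8) hp X
    calc (ENNReal.ofReal 8) ^ p * (2 * X) = 2 * ((ENNReal.ofReal 8) ^ p * X) := by ring
      _ ≤ (ENNReal.ofReal (2 * 8)) ^ p * X := this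
      _ = (ENNReal.ofReal 16) ^ p * X := by norm_num
  have c2Y : (ENNReal.ofReal (32 * K ^ 2)) ^ p * (2 * Y) ≤
      (ENNReal.ofReal (64 * K ^ 2)) ^ p * Y := by
    have := en_two_mul_coef (by positivity : (0:ℝ) ≤ 32 * K ^ 2) hp Y
    calc (ENNReal.ofReal (32 * K ^ 2)) ^ p * (2 * Y)
        = 2 * ((ENNReal.ofReal (32 * K ^ 2)) ^ p * Y) := by ring
      _ ≤ (ENNReal.ofReal (2 * (32 * K ^ 2))) ^ p * Y := this
      _ = (ENNReal.ofReal (64 * K ^ 2)) ^ p * Y := by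
          rw [show (2:ℝ) * (32 * K ^ 2) = 64 * K ^ 2 by ring]
  have c3X : (ENNReal.ofReal 16) ^ p * (2 * X) ≤ (ENNReal.ofReal 32) ^ p * X := by
    have := en_two_mul_coef (by norm_num : (0:ℝ) ≤ 16) hp X
    calc (ENNReal.ofReal 16) ^ p * (2 * X) = 2 * ((ENNReal.ofReal 16) ^ p * X) := by ring
      _ ≤ (ENNReal.ofReal (2 * 16)) ^ p * X := this
      _ = (ENNReal.ofReal 32) ^ p * X := by norm_num
  have c3Y : (ENNReal.ofReal (80 * K ^ 2)) ^ p * (2 * Y) ≤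
      (ENNReal.ofReal (160 * K ^ 2)) ^ p * Y := by
    have := en_two_mul_coef (by positivity : (0:ℝ) ≤ 80 * K ^ 2) hp Y
    calc (ENNReal.ofReal (80 * K ^ 2)) ^ p * (2 * Y)
        = 2 * ((ENNReal.ofReal (80 * K ^ 2)) ^ p * Y) := by ring
      _ ≤ (ENNReal.ofReal (2 * (80 * K ^ 2))) ^ p * Y := this
      _ = (ENNReal.ofReal (160 * K ^ 2)) ^ p * Y := by
          rw [show (2:ℝ) * (80 * K ^ 2) = 160 * K ^ 2 by ring]
  set M0 := 600 * (1 + K) ^ 2 with hM0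
  have hM0pos : (0:ℝ) < M0 := by positivity
  have hcoefX : (ENNReal.ofReal 16) ^ p + (ENNReal.ofReal 32) ^ p ≤
      (ENNReal.ofReal M0) ^ p := by
    calc (ENNReal.ofReal 16) ^ p + (ENNReal.ofReal 32) ^ p
        ≤ (ENNReal.ofReal (16 + 32)) ^ p := en_two_combine (by norm_num) (by norm_num) hp
      _ ≤ (ENNReal.ofReal M0) ^ p := en_base_mono (by nlinarith) hp0.le
  have hcoefY : (ENNReal.ofReal 8) ^ p + (ENNReal.ofReal (64 * K ^ 2)) ^ p +
      (ENNReal.ofReal (160 * K ^ 2)) ^ p ≤ (ENNReal.ofReal M0) ^ p := by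
    calc (ENNReal.ofReal 8) ^ p + (ENNReal.ofReal (64 * K ^ 2)) ^ p +
        (ENNReal.ofReal (160 * K ^ 2)) ^ p
        ≤ (ENNReal.ofReal (8 + 64 * K ^ 2 + 160 * K ^ 2)) ^ p :=
          en_three_combine (by norm_num) (by positivity) (by positivity) hp
      _ ≤ (ENNReal.ofReal M0) ^ p := en_base_mono (by nlinarith) hp0.le
  calc (∑' n : ℤ, ENNReal.ofReal ((lam (n + 2) - lam n) * ‖dd2 lam f n‖ ^ p)) +
      (∑' n : ℤ, ENNReal.ofReal ((lam (n + 2) - lam n) * ‖f n‖ ^ p)) +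
      (∑' n : ℤ, ENNReal.ofReal ((lam (n + 2) - lam n) ^ (p + 1) * ‖dd1 lam f n‖ ^ p))
      ≤ (ENNReal.ofReal 4) ^ p * (2 * Y) +
        ((ENNReal.ofReal 8) ^ p * (2 * X) + (ENNReal.ofReal (32 * K ^ 2)) ^ p * (2 * Y)) +
        ((ENNReal.ofReal 16) ^ p * (2 * X) + (ENNReal.ofReal (80 * K ^ 2)) ^ p * (2 * Y)) := by
        exact add_le_add (add_le_add b1 b2) b3
    _ ≤ (ENNReal.ofReal 8) ^ p * Y +
        ((ENNReal.ofReal 16) ^ p * X + (ENNReal.ofReal (64 * K ^ 2)) ^ p * Y) +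
        ((ENNReal.ofReal 32) ^ p * X + (ENNReal.ofReal (160 * K ^ 2)) ^ p * Y) := by
        exact add_le_add (add_le_add c1 (add_le_add c2X c2Y)) (add_le_add c3X c3Y)
    _ = ((ENNReal.ofReal 16) ^ p + (ENNReal.ofReal 32) ^ p) * X +
        ((ENNReal.ofReal 8) ^ p + (ENNReal.ofReal (64 * K ^ 2)) ^ p +
          (ENNReal.ofReal (160 * K ^ 2)) ^ p) * Y := by ring
    _ ≤ (ENNReal.ofReal M0) ^ p * X + (ENNReal.ofReal M0) ^ p * Y := by
        exact add_le_add (mul_le_mul_left hcoefX X) (mul_le_mul_left hcoefY Y)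
    _ = (ENNReal.ofReal M0) ^ p * (X + Y) := by ring

end LowerFull
end Stmt5Aux
namespace Stmt5Aux
open MeasureTheory Set intervalIntegral Filter
open scoped ENNReal NNReal

section UpperFull

lemma real_upper {p K h H H' a b1 A B : ℝ} (hp : 1 ≤ p) (hh : 0 < h) (hhK : h ≤ K)
    (hH : h ≤ H) (hH' : h ≤ H') (ha : 0 ≤ a) (hb1 : 0 ≤ b1) (hA : 0 ≤ A) (hB : 0 ≤ B) :
    h * (a + h * b1 + 4 * h ^ 2 * A + 2 * h ^ 2 * B) ^ p ≤
      4 ^ p * (H * a ^ p) + 4 ^ p * (H ^ (p + 1) * b1 ^ p) +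
        (16 * K ^ 2) ^ p * (H' * A ^ p) + (8 * K ^ 2) ^ p * (H * B ^ p) := by
  have hp0 : (0:ℝ) < p := by linarith
  have hH0 : 0 < H := lt_of_lt_of_le hh hH
  have hH'0 : 0 < H' := lt_of_lt_of_le hh hH'
  have hK0 : 0 < K := lt_of_lt_of_le hh hhK
  have hft := four_term (p := p) hp ha (by positivity : (0:ℝ) ≤ h * b1)
    (by positivity : (0:ℝ) ≤ 4 * h ^ 2 * A) (by positivity : (0:ℝ) ≤ 2 * h ^ 2 * B)
  have step0 : h * (a + h * b1 + 4 * h ^ 2 * A + 2 * h ^ 2 * B) ^ p ≤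
      4 ^ p * (h * a ^ p) + 4 ^ p * (h * (h * b1) ^ p) +
        4 ^ p * (h * (4 * h ^ 2 * A) ^ p) + 4 ^ p * (h * (2 * h ^ 2 * B) ^ p) := by
    have := mul_le_mul_of_nonneg_left hft hh.le
    calc h * (a + h * b1 + 4 * h ^ 2 * A + 2 * h ^ 2 * B) ^ p
        ≤ h * (4 ^ p * (a ^ p + (h * b1) ^ p + (4 * h ^ 2 * A) ^ p +
            (2 * h ^ 2 * B) ^ p)) := this
      _ = 4 ^ p * (h * a ^ p) + 4 ^ p * (h * (h * b1) ^ p) +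
          4 ^ p * (h * (4 * h ^ 2 * A) ^ p) + 4 ^ p * (h * (2 * h ^ 2 * B) ^ p) := by ring
  have t1 : 4 ^ p * (h * a ^ p) ≤ 4 ^ p * (H * a ^ p) := by
    have : h * a ^ p ≤ H * a ^ p :=
      mul_le_mul_of_nonneg_right hH (Real.rpow_nonneg ha p)
    exact mul_le_mul_of_nonneg_left this (Real.rpow_nonneg (by norm_num) p)
  have t2 : 4 ^ p * (h * (h * b1) ^ p) ≤ 4 ^ p * (H ^ (p + 1) * b1 ^ p) := by
    have e1 : (h * b1) ^ p = h ^ p * b1 ^ p := Real.mul_rpow hh.le hb1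
    have e2 : H ^ (p + 1) = H ^ p * H := by
      rw [Real.rpow_add hH0, Real.rpow_one]
    have h1 : h * (h ^ p * b1 ^ p) ≤ H * (H ^ p * b1 ^ p) := by
      have hhp : h ^ p ≤ H ^ p := Real.rpow_le_rpow hh.le hH hp0.le
      have := mul_le_mul hH (mul_le_mul_of_nonneg_right hhp (Real.rpow_nonneg hb1 p))
        (by positivity) hH0.le
      linarith [this]
    calc 4 ^ p * (h * (h * b1) ^ p) = 4 ^ p * (h * (h ^ p * b1 ^ p)) := by rw [e1]
      _ ≤ 4 ^ p * (H * (H ^ p * b1 ^ p)) :=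
          mul_le_mul_of_nonneg_left h1 (Real.rpow_nonneg (by norm_num) p)
      _ = 4 ^ p * (H ^ (p + 1) * b1 ^ p) := by rw [e2]; ring
  have t3 : 4 ^ p * (h * (4 * h ^ 2 * A) ^ p) ≤ (16 * K ^ 2) ^ p * (H' * A ^ p) := by
    have e1 : (4 * h ^ 2 * A) ^ p = (4 * h ^ 2) ^ p * A ^ p :=
      Real.mul_rpow (by positivity) hA
    have e2 : (4:ℝ) ^ p * (4 * h ^ 2) ^ p = (16 * h ^ 2) ^ p := by
      rw [← Real.mul_rpow (by norm_num) (by positivity)]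
      norm_num
      ring_nf
    have e3 : ((16 * h ^ 2 : ℝ)) ^ p ≤ (16 * K ^ 2) ^ p := by
      apply Real.rpow_le_rpow (by positivity) _ hp0.le
      nlinarith
    calc 4 ^ p * (h * (4 * h ^ 2 * A) ^ p)
        = (4 ^ p * (4 * h ^ 2) ^ p) * (A ^ p * h) := by rw [e1]; ring
      _ = (16 * h ^ 2) ^ p * (A ^ p * h) := by rw [e2]
      _ ≤ (16 * K ^ 2) ^ p * (A ^ p * H') := by
          apply mul_le_mul e3 _ (by positivity) (by positivity)
          exact mul_le_mul_of_nonneg_left hH' (Real.rpow_nonneg hA p)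
      _ = (16 * K ^ 2) ^ p * (H' * A ^ p) := by ring
  have t4 : 4 ^ p * (h * (2 * h ^ 2 * B) ^ p) ≤ (8 * K ^ 2) ^ p * (H * B ^ p) := by
    have e1 : (2 * h ^ 2 * B) ^ p = (2 * h ^ 2) ^ p * B ^ p :=
      Real.mul_rpow (by positivity) hB
    have e2 : (4:ℝ) ^ p * (2 * h ^ 2) ^ p = (8 * h ^ 2) ^ p := by
      rw [← Real.mul_rpow (by norm_num) (by positivity)]
      norm_num
      ring_nf
    have e3 : ((8 * h ^ 2 : ℝ)) ^ p ≤ (8 * K ^ 2) ^ p := by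
      apply Real.rpow_le_rpow (by positivity) _ hp0.le
      nlinarith
    calc 4 ^ p * (h * (2 * h ^ 2 * B) ^ p)
        = (4 ^ p * (2 * h ^ 2) ^ p) * (B ^ p * h) := by rw [e1]; ring
      _ = (8 * h ^ 2) ^ p * (B ^ p * h) := by rw [e2]
      _ ≤ (8 * K ^ 2) ^ p * (B ^ p * H) := by
          apply mul_le_mul e3 _ (by positivity) (by positivity)
          exact mul_le_mul_of_nonneg_left hH (Real.rpow_nonneg hB p)
      _ = (8 * K ^ 2) ^ p * (H * B ^ p) := by ring
  calc h * (a + h * b1 + 4 * h ^ 2 * A + 2 * h ^ 2 * B) ^ p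
      ≤ 4 ^ p * (h * a ^ p) + 4 ^ p * (h * (h * b1) ^ p) +
        4 ^ p * (h * (4 * h ^ 2 * A) ^ p) + 4 ^ p * (h * (2 * h ^ 2 * B) ^ p) := step0
    _ ≤ 4 ^ p * (H * a ^ p) + 4 ^ p * (H ^ (p + 1) * b1 ^ p) +
        (16 * K ^ 2) ^ p * (H' * A ^ p) + (8 * K ^ 2) ^ p * (H * B ^ p) :=
      add_le_add (add_le_add (add_le_add t1 t2) t3) t4

lemma real_upperG {p K h H H' A B : ℝ} (hp : 1 ≤ p) (hh : 0 < h) (hhK : h ≤ K)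
    (hH : h ≤ H) (hH' : h ≤ H') (hA : 0 ≤ A) (hB : 0 ≤ B) :
    h * (10 * (A + B)) ^ p ≤ 20 ^ p * (H' * A ^ p) + 20 ^ p * (H * B ^ p) := by
  have hp0 : (0:ℝ) < p := by linarith
  have e1 : (10 * (A + B)) ^ p = 10 ^ p * (A + B) ^ p := Real.mul_rpow (by norm_num)
    (by positivity)
  have e2 : (A + B) ^ p ≤ 2 ^ p * (A ^ p + B ^ p) := two_term hp hA hB
  have e3 : (10:ℝ) ^ p * 2 ^ p = 20 ^ p := by
    rw [← Real.mul_rpow (by norm_num) (by norm_num)]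
    norm_num
  have h10 : (0:ℝ) ≤ 10 ^ p := Real.rpow_nonneg (by norm_num) p
  calc h * (10 * (A + B)) ^ p = h * (10 ^ p * (A + B) ^ p) := by rw [e1]
    _ ≤ h * (10 ^ p * (2 ^ p * (A ^ p + B ^ p))) := by
        apply mul_le_mul_of_nonneg_left _ hh.le
        exact mul_le_mul_of_nonneg_left e2 h10
    _ = 20 ^ p * (A ^ p * h) + 20 ^ p * (B ^ p * h) := by rw [← e3]; ring
    _ ≤ 20 ^ p * (A ^ p * H') + 20 ^ p * (B ^ p * H) := by
        have hA' : A ^ p * h ≤ A ^ p * H' :=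
          mul_le_mul_of_nonneg_left hH' (Real.rpow_nonneg hA p)
        have hB' : B ^ p * h ≤ B ^ p * H :=
          mul_le_mul_of_nonneg_left hH (Real.rpow_nonneg hB p)
        have h20 : (0:ℝ) ≤ 20 ^ p := Real.rpow_nonneg (by norm_num) p
        exact add_le_add (mul_le_mul_of_nonneg_left hA' h20)
          (mul_le_mul_of_nonneg_left hB' h20)
    _ = 20 ^ p * (H' * A ^ p) + 20 ^ p * (H * B ^ p) := by ring

variable {K p : ℝ} {lam : ℤ → ℝ} {f : ℤ → ℂ}

lemma upper_main (hK : 0 < K) (hp : 1 ≤ p) (hg : GoodSeq lam)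
    (hKs : ∀ n : ℤ, lam (n + 1) - lam n ≤ K) :
    (∫⁻ t, ENNReal.ofReal (‖Fc lam f hg t‖ ^ p)) +
      (∫⁻ t, ENNReal.ofReal (‖Gc lam f hg t‖ ^ p)) ≤
      (ENNReal.ofReal (600 * (1 + K) ^ 2)) ^ p *
        ((∑' n : ℤ, ENNReal.ofReal ((lam (n + 2) - lam n) * ‖dd2 lam f n‖ ^ p)) +
         (∑' n : ℤ, ENNReal.ofReal ((lam (n + 2) - lam n) * ‖f n‖ ^ p)) +
         (∑' n : ℤ, ENNReal.ofReal ((lam (n + 2) - lam n) ^ (p + 1) * ‖dd1 lam f n‖ ^ p))) := by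
  have hp0 : (0:ℝ) < p := by linarith
  set S1 := ∑' n : ℤ, ENNReal.ofReal ((lam (n + 2) - lam n) * ‖dd2 lam f n‖ ^ p) with hS1
  set S2 := ∑' n : ℤ, ENNReal.ofReal ((lam (n + 2) - lam n) * ‖f n‖ ^ p) with hS2
  set S3 := ∑' n : ℤ, ENNReal.ofReal ((lam (n + 2) - lam n) ^ (p + 1) *
    ‖dd1 lam f n‖ ^ p) with hS3
  set w1 : ℤ → ℝ≥0∞ :=
    fun n => ENNReal.ofReal ((lam (n + 2) - lam n) * ‖dd2 lam f n‖ ^ p) with hw1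
  -- basic facts per n
  have hfacts : ∀ n : ℤ, 0 < lam (n + 1) - lam n ∧ lam (n + 1) - lam n ≤ K ∧
      lam (n + 1) - lam n ≤ lam (n + 2) - lam n ∧
      lam (n + 1) - lam n ≤ lam (n + 1) - lam (n - 1) := by
    intro n
    have h1 : lam n < lam (n + 1) := hg.1 (by omega)
    have h2 : lam (n + 1) < lam (n + 2) := hg.1 (by omega)
    have h3 : lam (n - 1) < lam n := hg.1 (by omega)
    exact ⟨by linarith, hKs n, by linarith, by linarith⟩
  -- X bound
  have hXbound : (∫⁻ t, ENNReal.ofReal (‖Fc lam f hg t‖ ^ p)) ≤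
      (ENNReal.ofReal 4) ^ p * S2 + (ENNReal.ofReal 4) ^ p * S3 +
        (ENNReal.ofReal (16 * K ^ 2)) ^ p * S1 + (ENNReal.ofReal (8 * K ^ 2)) ^ p * S1 := by
    rw [lintegral_partition lam hg]
    have hper : ∀ n : ℤ, (∫⁻ t in Ico (lam n) (lam (n + 1)),
        ENNReal.ofReal (‖Fc lam f hg t‖ ^ p)) ≤
        (ENNReal.ofReal 4) ^ p * ENNReal.ofReal ((lam (n + 2) - lam n) * ‖f n‖ ^ p) +
        (ENNReal.ofReal 4) ^ p * ENNReal.ofReal ((lam (n + 2) - lam n) ^ (p + 1) *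
          ‖dd1 lam f n‖ ^ p) +
        (ENNReal.ofReal (16 * K ^ 2)) ^ p * w1 (n - 1) +
        (ENNReal.ofReal (8 * K ^ 2)) ^ p * w1 n := by
      intro n
      obtain ⟨hh, hhK, hH, hH'⟩ := hfacts n
      set h := lam (n + 1) - lam n with hhdef
      set Mn := ‖f n‖ + h * ‖dd1 lam f n‖ + 4 * h ^ 2 * ‖dd2 lam f (n - 1)‖ +
        2 * h ^ 2 * ‖dd2 lam f n‖ with hMn
      have hMn0 : 0 ≤ Mn := by positivity
      have hpiece := piece_bound (φ := Fc lam f hg) (a := lam n) (b := lam (n + 1))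
        (hg.1 (by omega)).le hMn0 hp (fun x hx => Fc_sup lam f hg n hx)
      have hru := real_upper (K := K) (H := lam (n + 2) - lam n)
        (H' := lam (n + 1) - lam (n - 1)) (a := ‖f n‖) (b1 := ‖dd1 lam f n‖)
        (A := ‖dd2 lam f (n - 1)‖) (B := ‖dd2 lam f n‖) hp hh hhK hH hH'
        (norm_nonneg _) (norm_nonneg _) (norm_nonneg _) (norm_nonneg _)
      have hw1n : w1 n = ENNReal.ofReal ((lam (n + 2) - lam n) * ‖dd2 lam f n‖ ^ p) := rfl
      have hw1n' : w1 (n - 1) =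
          ENNReal.ofReal ((lam (n + 1) - lam (n - 1)) * ‖dd2 lam f (n - 1)‖ ^ p) := by
        rw [hw1]
        simp only
        rw [show n - 1 + 2 = n + 1 by ring]
      calc (∫⁻ t in Ico (lam n) (lam (n + 1)), ENNReal.ofReal (‖Fc lam f hg t‖ ^ p))
          ≤ ENNReal.ofReal ((lam (n + 1) - lam n) * Mn ^ p) := hpiece
        _ ≤ ENNReal.ofReal (4 ^ p * ((lam (n + 2) - lam n) * ‖f n‖ ^ p) +
              4 ^ p * ((lam (n + 2) - lam n) ^ (p + 1) * ‖dd1 lam f n‖ ^ p) +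
              (16 * K ^ 2) ^ p * ((lam (n + 1) - lam (n - 1)) * ‖dd2 lam f (n - 1)‖ ^ p) +
              (8 * K ^ 2) ^ p * ((lam (n + 2) - lam n) * ‖dd2 lam f n‖ ^ p)) := by
            apply ENNReal.ofReal_le_ofReal
            exact hru
        _ ≤ ENNReal.ofReal (4 ^ p * ((lam (n + 2) - lam n) * ‖f n‖ ^ p)) +
            ENNReal.ofReal (4 ^ p * ((lam (n + 2) - lam n) ^ (p + 1) * ‖dd1 lam f n‖ ^ p)) +
            ENNReal.ofReal ((16 * K ^ 2) ^ p *
              ((lam (n + 1) - lam (n - 1)) * ‖dd2 lam f (n - 1)‖ ^ p)) +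
            ENNReal.ofReal ((8 * K ^ 2) ^ p *
              ((lam (n + 2) - lam n) * ‖dd2 lam f n‖ ^ p)) := by
            refine le_trans ENNReal.ofReal_add_le ?_
            gcongr
            refine le_trans ENNReal.ofReal_add_le ?_
            gcongr
            exact ENNReal.ofReal_add_le
        _ = (ENNReal.ofReal 4) ^ p * ENNReal.ofReal ((lam (n + 2) - lam n) * ‖f n‖ ^ p) +
            (ENNReal.ofReal 4) ^ p * ENNReal.ofReal ((lam (n + 2) - lam n) ^ (p + 1) *
              ‖dd1 lam f n‖ ^ p) +
            (ENNReal.ofReal (16 * K ^ 2)) ^ p * w1 (n - 1) +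
            (ENNReal.ofReal (8 * K ^ 2)) ^ p * w1 n := by
            rw [hw1n, hw1n']
            rw [ENNReal.ofReal_mul (Real.rpow_nonneg (by norm_num) p),
              ENNReal.ofReal_mul (Real.rpow_nonneg (by norm_num) p),
              ENNReal.ofReal_mul (Real.rpow_nonneg (by positivity) p),
              ENNReal.ofReal_mul (Real.rpow_nonneg (by positivity) p),
              en_ofReal_rpow (by norm_num : (0:ℝ) ≤ 4) hp0,
              en_ofReal_rpow (by positivity : (0:ℝ) ≤ 16 * K ^ 2) hp0,
              en_ofReal_rpow (by positivity : (0:ℝ) ≤ 8 * K ^ 2) hp0]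
    have hshift : ∑' n : ℤ, w1 (n - 1) = S1 := by
      rw [hS1]
      exact (Equiv.subRight (1:ℤ)).tsum_eq w1
    calc ∑' n : ℤ, (∫⁻ t in Ico (lam n) (lam (n + 1)),
          ENNReal.ofReal (‖Fc lam f hg t‖ ^ p))
        ≤ ∑' n : ℤ, ((ENNReal.ofReal 4) ^ p *
            ENNReal.ofReal ((lam (n + 2) - lam n) * ‖f n‖ ^ p) +
          (ENNReal.ofReal 4) ^ p * ENNReal.ofReal ((lam (n + 2) - lam n) ^ (p + 1) *
            ‖dd1 lam f n‖ ^ p) +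
          (ENNReal.ofReal (16 * K ^ 2)) ^ p * w1 (n - 1) +
          (ENNReal.ofReal (8 * K ^ 2)) ^ p * w1 n) := ENNReal.tsum_le_tsum hper
      _ = (ENNReal.ofReal 4) ^ p * S2 + (ENNReal.ofReal 4) ^ p * S3 +
          (ENNReal.ofReal (16 * K ^ 2)) ^ p * S1 +
          (ENNReal.ofReal (8 * K ^ 2)) ^ p * S1 := by
          rw [ENNReal.tsum_add, ENNReal.tsum_add, ENNReal.tsum_add,
            ENNReal.tsum_mul_left, ENNReal.tsum_mul_left, ENNReal.tsum_mul_left,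
            ENNReal.tsum_mul_left, hshift, hS2, hS3, hS1, hw1]
  -- Y bound
  have hYbound : (∫⁻ t, ENNReal.ofReal (‖Gc lam f hg t‖ ^ p)) ≤
      (ENNReal.ofReal 20) ^ p * S1 + (ENNReal.ofReal 20) ^ p * S1 := by
    rw [lintegral_partition lam hg]
    have hper : ∀ n : ℤ, (∫⁻ t in Ico (lam n) (lam (n + 1)),
        ENNReal.ofReal (‖Gc lam f hg t‖ ^ p)) ≤
        (ENNReal.ofReal 20) ^ p * w1 (n - 1) + (ENNReal.ofReal 20) ^ p * w1 n := by
      intro n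
      obtain ⟨hh, hhK, hH, hH'⟩ := hfacts n
      have hpiece := piece_bound (φ := Gc lam f hg) (a := lam n) (b := lam (n + 1))
        (hg.1 (by omega)).le (by positivity) hp (fun x hx => Gc_sup lam f hg n hx)
      have hru := real_upperG (K := K) (H := lam (n + 2) - lam n)
        (H' := lam (n + 1) - lam (n - 1)) (A := ‖dd2 lam f (n - 1)‖)
        (B := ‖dd2 lam f n‖) hp hh hhK hH hH' (norm_nonneg _) (norm_nonneg _)
      have hw1n' : w1 (n - 1) =
          ENNReal.ofReal ((lam (n + 1) - lam (n - 1)) * ‖dd2 lam f (n - 1)‖ ^ p) := by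
        rw [hw1]
        simp only
        rw [show n - 1 + 2 = n + 1 by ring]
      calc (∫⁻ t in Ico (lam n) (lam (n + 1)), ENNReal.ofReal (‖Gc lam f hg t‖ ^ p))
          ≤ ENNReal.ofReal ((lam (n + 1) - lam n) *
              (10 * (‖dd2 lam f (n - 1)‖ + ‖dd2 lam f n‖)) ^ p) := hpiece
        _ ≤ ENNReal.ofReal (20 ^ p *
              ((lam (n + 1) - lam (n - 1)) * ‖dd2 lam f (n - 1)‖ ^ p) +
              20 ^ p * ((lam (n + 2) - lam n) * ‖dd2 lam f n‖ ^ p)) :=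
            ENNReal.ofReal_le_ofReal hru
        _ ≤ ENNReal.ofReal (20 ^ p *
              ((lam (n + 1) - lam (n - 1)) * ‖dd2 lam f (n - 1)‖ ^ p)) +
            ENNReal.ofReal (20 ^ p * ((lam (n + 2) - lam n) * ‖dd2 lam f n‖ ^ p)) :=
            ENNReal.ofReal_add_le
        _ = (ENNReal.ofReal 20) ^ p * w1 (n - 1) + (ENNReal.ofReal 20) ^ p * w1 n := by
            rw [hw1n', hw1]
            simp only
            rw [ENNReal.ofReal_mul (Real.rpow_nonneg (by norm_num) p),
              ENNReal.ofReal_mul (Real.rpow_nonneg (by norm_num) p),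
              en_ofReal_rpow (by norm_num : (0:ℝ) ≤ 20) hp0]
    have hshift : ∑' n : ℤ, w1 (n - 1) = S1 := by
      rw [hS1]
      exact (Equiv.subRight (1:ℤ)).tsum_eq w1
    calc ∑' n : ℤ, (∫⁻ t in Ico (lam n) (lam (n + 1)),
          ENNReal.ofReal (‖Gc lam f hg t‖ ^ p))
        ≤ ∑' n : ℤ, ((ENNReal.ofReal 20) ^ p * w1 (n - 1) +
            (ENNReal.ofReal 20) ^ p * w1 n) := ENNReal.tsum_le_tsum hper
      _ = (ENNReal.ofReal 20) ^ p * S1 + (ENNReal.ofReal 20) ^ p * S1 := by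
          rw [ENNReal.tsum_add, ENNReal.tsum_mul_left, ENNReal.tsum_mul_left, hshift,
            hS1, hw1]
  -- combine
  set M0 := 600 * (1 + K) ^ 2 with hM0
  have hcoef1 : (ENNReal.ofReal 4) ^ p ≤ (ENNReal.ofReal M0) ^ p :=
    en_base_mono (by nlinarith) hp0.le
  have hcoefS1 : (ENNReal.ofReal (16 * K ^ 2)) ^ p + (ENNReal.ofReal (8 * K ^ 2)) ^ p +
      ((ENNReal.ofReal 20) ^ p + (ENNReal.ofReal 20) ^ p) ≤ (ENNReal.ofReal M0) ^ p := by
    calc (ENNReal.ofReal (16 * K ^ 2)) ^ p + (ENNReal.ofReal (8 * K ^ 2)) ^ p +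
        ((ENNReal.ofReal 20) ^ p + (ENNReal.ofReal 20) ^ p)
        ≤ (ENNReal.ofReal (16 * K ^ 2 + 8 * K ^ 2)) ^ p +
          (ENNReal.ofReal (20 + 20)) ^ p := by
          exact add_le_add (en_two_combine (by positivity) (by positivity) hp)
            (en_two_combine (by norm_num) (by norm_num) hp)
      _ ≤ (ENNReal.ofReal (16 * K ^ 2 + 8 * K ^ 2 + (20 + 20))) ^ p :=
          en_two_combine (by positivity) (by norm_num) hp
      _ ≤ (ENNReal.ofReal M0) ^ p := en_base_mono (by nlinarith) hp0.le
  calc (∫⁻ t, ENNReal.ofReal (‖Fc lam f hg t‖ ^ p)) +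
      (∫⁻ t, ENNReal.ofReal (‖Gc lam f hg t‖ ^ p))
      ≤ ((ENNReal.ofReal 4) ^ p * S2 + (ENNReal.ofReal 4) ^ p * S3 +
          (ENNReal.ofReal (16 * K ^ 2)) ^ p * S1 + (ENNReal.ofReal (8 * K ^ 2)) ^ p * S1) +
        ((ENNReal.ofReal 20) ^ p * S1 + (ENNReal.ofReal 20) ^ p * S1) :=
        add_le_add hXbound hYbound
    _ = (ENNReal.ofReal 4) ^ p * S2 + (ENNReal.ofReal 4) ^ p * S3 +
        ((ENNReal.ofReal (16 * K ^ 2)) ^ p + (ENNReal.ofReal (8 * K ^ 2)) ^ p +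
          ((ENNReal.ofReal 20) ^ p + (ENNReal.ofReal 20) ^ p)) * S1 := by ring
    _ ≤ (ENNReal.ofReal M0) ^ p * S2 + (ENNReal.ofReal M0) ^ p * S3 +
        (ENNReal.ofReal M0) ^ p * S1 := by
        exact add_le_add (add_le_add (mul_le_mul_left hcoef1 S2)
          (mul_le_mul_left hcoef1 S3)) (mul_le_mul_left hcoefS1 S1)
    _ = (ENNReal.ofReal M0) ^ p * (S1 + S2 + S3) := by ring

end UpperFull
end Stmt5Aux
/-- for every `K > 0`, equivalence (constants depending only on `K`) of
`‖·‖_{W^2_p|Λ}` with `N(f)` where `N(f)^p = ∑_n (λ_{n+2}-λ_n)|f[λ_n,λ_{n+1},λ_{n+2}]|^p +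
∑_n (λ_{n+2}-λ_n)|f_n|^p + ∑_n (λ_{n+2}-λ_n)^{p+1}|f[λ_n,λ_{n+1}]|^p`, for sequences with
steps bounded by `K`. -/
theorem stmt5 (K : ℝ) (hK : 0 < K) :
    ∃ c C : ℝ, 0 < c ∧ c ≤ C ∧
      ∀ p : ℝ, 1 ≤ p → ∀ lam : ℤ → ℝ, GoodSeq lam →
        (∀ n : ℤ, lam (n + 1) - lam n ≤ K) → ∀ f : ℤ → ℂ,
        ENNReal.ofReal c *
            ((∑' n : ℤ, ENNReal.ofReal ((lam (n + 2) - lam n) *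
                ‖dd2 lam f n‖ ^ p)) +
              (∑' n : ℤ, ENNReal.ofReal ((lam (n + 2) - lam n) *
                ‖f n‖ ^ p)) +
              ∑' n : ℤ, ENNReal.ofReal ((lam (n + 2) - lam n) ^ (p + 1) *
                ‖dd1 lam f n‖ ^ p)) ^ (1 / p) ≤ traceW 2 p lam f ∧
        traceW 2 p lam f ≤
          ENNReal.ofReal C *
            ((∑' n : ℤ, ENNReal.ofReal ((lam (n + 2) - lam n) *
                ‖dd2 lam f n‖ ^ p)) +
              (∑' n : ℤ, ENNReal.ofReal ((lam (n + 2) - lam n) *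
                ‖f n‖ ^ p)) +
              ∑' n : ℤ, ENNReal.ofReal ((lam (n + 2) - lam n) ^ (p + 1) *
                ‖dd1 lam f n‖ ^ p)) ^ (1 / p) := by
  classical
  open Stmt5Aux MeasureTheory Set in
  refine ⟨(600 * (1 + K) ^ 2)⁻¹, 600 * (1 + K) ^ 2, ?_, ?_, ?_⟩
  · positivity
  · have hM1 : (1:ℝ) ≤ 600 * (1 + K) ^ 2 := by nlinarith
    calc (600 * (1 + K) ^ 2)⁻¹ ≤ 1 := inv_le_one_of_one_le₀ hM1
      _ ≤ 600 * (1 + K) ^ 2 := hM1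
  intro p hp lam hg hKs f
  have hp0 : (0:ℝ) < p := by linarith
  have hM0pos : (0:ℝ) < 600 * (1 + K) ^ 2 := by positivity
  have h21 : (2 - 1 : ℕ) = 1 := rfl
  have hcM : ENNReal.ofReal (600 * (1 + K) ^ 2)⁻¹ *
      ENNReal.ofReal (600 * (1 + K) ^ 2) = 1 := by
    rw [← ENNReal.ofReal_mul (by positivity), inv_mul_cancel₀ hM0pos.ne']
    exact ENNReal.ofReal_one
  have hpow : ∀ x : ℝ≥0∞,
      ((ENNReal.ofReal (600 * (1 + K) ^ 2)) ^ p * x) ^ (1 / p) =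
        ENNReal.ofReal (600 * (1 + K) ^ 2) * x ^ (1 / p) := by
    intro x
    rw [ENNReal.mul_rpow_of_nonneg _ _ (by positivity : (0:ℝ) ≤ 1 / p),
      ← ENNReal.rpow_mul, mul_one_div_cancel hp0.ne', ENNReal.rpow_one]
  constructor
  · -- lower bound
    unfold traceW
    apply le_iInf; intro F
    apply le_iInf; intro G
    apply le_iInf; intro hadm
    obtain ⟨hF0, hG0, hFTC0, hint⟩ := hadm
    rw [h21] at hF0 hFTC0
    have hF : ContDiff ℝ 1 F := by exact_mod_cast hF0
    have hFTC : ∀ a b : ℝ, a ≤ b → deriv F b - deriv F a = ∫ t in a..b, G t := by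
      intro a b hab
      have := hFTC0 a b hab
      rwa [iteratedDeriv_one] at this
    have hlow := Stmt5Aux.lower_main hK hp hg hKs hF hFTC hG0 hint
    calc ENNReal.ofReal (600 * (1 + K) ^ 2)⁻¹ *
        ((∑' n : ℤ, ENNReal.ofReal ((lam (n + 2) - lam n) * ‖dd2 lam f n‖ ^ p)) +
          (∑' n : ℤ, ENNReal.ofReal ((lam (n + 2) - lam n) * ‖f n‖ ^ p)) +
          ∑' n : ℤ, ENNReal.ofReal ((lam (n + 2) - lam n) ^ (p + 1) *
            ‖dd1 lam f n‖ ^ p)) ^ (1 / p)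
        ≤ ENNReal.ofReal (600 * (1 + K) ^ 2)⁻¹ *
          ((ENNReal.ofReal (600 * (1 + K) ^ 2)) ^ p *
            ((∫⁻ t, ENNReal.ofReal (‖F t‖ ^ p)) +
              ∫⁻ t, ENNReal.ofReal (‖G t‖ ^ p))) ^ (1 / p) := by
          exact mul_le_mul_right (ENNReal.rpow_le_rpow hlow (by positivity)) _
      _ = (ENNReal.ofReal (600 * (1 + K) ^ 2)⁻¹ * ENNReal.ofReal (600 * (1 + K) ^ 2)) *
          ((∫⁻ t, ENNReal.ofReal (‖F t‖ ^ p)) +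
            ∫⁻ t, ENNReal.ofReal (‖G t‖ ^ p)) ^ (1 / p) := by
          rw [hpow]; ring
      _ = ((∫⁻ t, ENNReal.ofReal (‖F t‖ ^ p)) +
            ∫⁻ t, ENNReal.ofReal (‖G t‖ ^ p)) ^ (1 / p) := by
          rw [hcM, one_mul]
  · -- upper bound
    unfold traceW
    have hup := Stmt5Aux.upper_main (f := f) hK hp hg hKs
    calc (⨅ (F : ℝ → ℂ) (G : ℝ → ℂ) (_ : AdmissibleExt 2 lam f F G),
          ((∫⁻ t, ENNReal.ofReal (‖F t‖ ^ p)) +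
            (∫⁻ t, ENNReal.ofReal (‖G t‖ ^ p))) ^ (1 / p))
        ≤ ((∫⁻ t, ENNReal.ofReal (‖Stmt5Aux.Fc lam f hg t‖ ^ p)) +
            (∫⁻ t, ENNReal.ofReal (‖Stmt5Aux.Gc lam f hg t‖ ^ p))) ^ (1 / p) := by
          refine iInf_le_of_le (Stmt5Aux.Fc lam f hg) ?_
          refine iInf_le_of_le (Stmt5Aux.Gc lam f hg) ?_
          exact iInf_le _ (Stmt5Aux.Fc_admissible lam f hg)
      _ ≤ ((ENNReal.ofReal (600 * (1 + K) ^ 2)) ^ p *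
            ((∑' n : ℤ, ENNReal.ofReal ((lam (n + 2) - lam n) * ‖dd2 lam f n‖ ^ p)) +
              (∑' n : ℤ, ENNReal.ofReal ((lam (n + 2) - lam n) * ‖f n‖ ^ p)) +
              ∑' n : ℤ, ENNReal.ofReal ((lam (n + 2) - lam n) ^ (p + 1) *
                ‖dd1 lam f n‖ ^ p))) ^ (1 / p) :=
          ENNReal.rpow_le_rpow hup (by positivity)
      _ = ENNReal.ofReal (600 * (1 + K) ^ 2) *
          ((∑' n : ℤ, ENNReal.ofReal ((lam (n + 2) - lam n) * ‖dd2 lam f n‖ ^ p)) +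
            (∑' n : ℤ, ENNReal.ofReal ((lam (n + 2) - lam n) * ‖f n‖ ^ p)) +
            ∑' n : ℤ, ENNReal.ofReal ((lam (n + 2) - lam n) ^ (p + 1) *
              ‖dd1 lam f n‖ ^ p)) ^ (1 / p) := hpow _
end

section
/- For every K > 0 there is a constant C depending only on K such that for every real p with 1 ≤ p < ∞, every strictly increasing sequence λ : ℤ → ℝ with λ_n → ±∞ as n → ±∞ and λ_{n+1} − λ_n ≤ K for all n, and every f : ℤ → ℂ with finite trace norm ‖f‖_{W^1_p|Λ} < ∞, the piecewise linear interpolant Φ₁f is an admissible 1-extension of f and (∫_ℝ |(Φ₁f)(t)|^p dt + ∫_ℝ |G(t)|^p dt)^{1/p} ≤ C ‖f‖_{W^1_p|Λ}, where G is the a.e. derivative of Φ₁f given by G(x) = f[λ_n,λ_{n+1}] for x ∈ (λ_n,λ_{n+1}). -/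
open MeasureTheory
open scoped ENNReal NNReal

section Stmt6Aux

open Set MeasureTheory

variable {lam : ℤ → ℝ}

lemma locate6 (hg : GoodSeq lam) (x : ℝ) : ∃ n : ℤ, lam n < x ∧ x ≤ lam (n + 1) := by
  obtain ⟨hm, hb, ht⟩ := hg
  obtain ⟨M, hM⟩ := (ht.eventually_ge_atTop x).exists
  obtain ⟨b, hb'⟩ := (hb.eventually_le_atBot (x - 1)).exists
  have Hbdd : ∃ c : ℤ, ∀ z : ℤ, x ≤ lam z → c ≤ z := by
    refine ⟨b, fun z hz => ?_⟩
    by_contra hc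
    push_neg at hc
    have h2 := hm hc
    linarith
  obtain ⟨m, hm1, hm2⟩ := Int.exists_least_of_bdd Hbdd ⟨M, hM⟩
  refine ⟨m - 1, ?_, by simpa using hm1⟩
  by_contra hc
  push_neg at hc
  exact absurd (hm2 _ hc) (by omega)

lemma partition6 (hg : GoodSeq lam) (φ : ℝ → ℝ≥0∞) :
    ∫⁻ t, φ t = ∑' n : ℤ, ∫⁻ t in Ioc (lam n) (lam (n + 1)), φ t := by
  have hu : (⋃ n : ℤ, Ioc (lam n) (lam (n + 1))) = univ := by
    ext x
    simp only [mem_iUnion, mem_Ioc, mem_univ, iff_true]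
    exact locate6 hg x
  have hd : Pairwise (Function.onFun Disjoint fun n : ℤ => Ioc (lam n) (lam (n + 1))) := by
    have key : ∀ i j : ℤ, i < j →
        Disjoint (Ioc (lam i) (lam (i + 1))) (Ioc (lam j) (lam (j + 1))) := by
      intro i j h
      rw [Set.Ioc_disjoint_Ioc]
      exact le_trans (min_le_left _ _)
        (le_trans (hg.1.monotone (by omega)) (le_max_right _ _))
    intro i j hij
    rcases hij.lt_or_gt with h | h
    · exact key i j h
    · exact (key j i h).symm
  rw [← setLIntegral_univ, ← hu, lintegral_iUnion (fun n => measurableSet_Ioc) hd φ]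

lemma step6 {h' X Z : ℝ≥0∞} (h0 : h' ≠ 0) (htop : h' ≠ ⊤) {p : ℝ} (hp : 1 ≤ p)
    (hXZ : X * h' ≤ Z * h' ^ (1 - 1 / p)) : h' * X ^ p ≤ Z ^ p := by
  have hp0 : (0:ℝ) < p := lt_of_lt_of_le one_pos hp
  have hexp : (1 - 1 / p) * p = p - 1 := by field_simp
  have h2 : X ^ p * h' ^ p ≤ Z ^ p * h' ^ (p - 1) := by
    have h3 := ENNReal.rpow_le_rpow hXZ hp0.le
    rwa [ENNReal.mul_rpow_of_nonneg _ _ hp0.le, ENNReal.mul_rpow_of_nonneg _ _ hp0.le,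
      ← ENNReal.rpow_mul, hexp] at h3
  calc h' * X ^ p = X ^ p * h' ^ p * h' ^ (1 - p) := by
        rw [mul_assoc, ← ENNReal.rpow_add _ _ h0 htop]
        norm_num [mul_comm]
    _ ≤ Z ^ p * h' ^ (p - 1) * h' ^ (1 - p) := mul_le_mul_left h2 _
    _ = Z ^ p := by
        rw [mul_assoc, ← ENNReal.rpow_add _ _ h0 htop]
        norm_num

lemma holder6 {s : Set ℝ} (g : ℝ → ℝ≥0∞) (hgm : AEMeasurable g (volume.restrict s))
    {p : ℝ} (hp : 1 ≤ p) :
    (∫⁻ t in s, g t) ≤ (∫⁻ t in s, g t ^ p) ^ (1 / p) * (volume s) ^ (1 - 1 / p) := by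
  rcases eq_or_lt_of_le hp with heq | hp1
  · simp [← heq]
  · have hpq := Real.HolderConjugate.conjExponent hp1
    have h := ENNReal.lintegral_mul_le_Lp_mul_Lq (volume.restrict s) hpq hgm
      (aemeasurable_const (b := (1:ℝ≥0∞)))
    have h1q : 1 / (p / (p - 1)) = 1 - 1 / p := by
      rw [one_div_div]
      field_simp
    simpa [ENNReal.one_rpow, Measure.restrict_apply_univ, h1q,
      Real.conjExponent] using h

end Stmt6Aux

/-- for every `K > 0` there is `C` (depending only on `K`) such that for every
`f` with finite `W^1_p` trace norm, `Φ₁ f` is an admissible 1-extension of `f` with a.e.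
derivative `G(x) = f[λ_n,λ_{n+1}]` on `(λ_n,λ_{n+1})`, and
`(∫|Φ₁f|^p + ∫|G|^p)^{1/p} ≤ C ‖f‖_{W^1_p|Λ}`. -/
theorem stmt6 (K : ℝ) (hK : 0 < K) :
    ∃ C : ℝ, 0 < C ∧
      ∀ p : ℝ, 1 ≤ p → ∀ lam : ℤ → ℝ, GoodSeq lam →
        (∀ n : ℤ, lam (n + 1) - lam n ≤ K) → ∀ f : ℤ → ℂ,
        traceW 1 p lam f < ⊤ →
        ∀ F G : ℝ → ℂ,
          (∀ n : ℤ, ∀ x : ℝ, lam n ≤ x → x ≤ lam (n + 1) → F x = phi1P lam f n x) →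
          (∀ n : ℤ, ∀ x : ℝ, lam n < x → x < lam (n + 1) → G x = dd1 lam f n) →
          AdmissibleExt 1 lam f F G ∧
          ((∫⁻ t, ENNReal.ofReal (‖F t‖ ^ p)) +
              ∫⁻ t, ENNReal.ofReal (‖G t‖ ^ p)) ^ (1 / p) ≤
            ENNReal.ofReal C * traceW 1 p lam f := by
  classical
  refine ⟨4 * K + 5, by linarith, ?_⟩
  intro p hp lam hg hKb f _hfin F G hF hG
  have hmono := hg.1
  have hlt : ∀ n : ℤ, lam n < lam (n + 1) := fun n => hmono (by omega)
  have hp0 : (0:ℝ) < p := by linarith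
  have hne : ∀ n : ℤ, lam (n + 1) - lam n ≠ 0 := fun n => by have := hlt n; linarith
  -- value formula for F
  have hFval : ∀ n : ℤ, ∀ x : ℝ, lam n ≤ x → x ≤ lam (n + 1) →
      F x = f n + ((x - lam n : ℝ) : ℂ) * dd1 lam f n := by
    intro n x h1 h2
    rw [hF n x h1 h2, phi1P, dd1]
    have h0 : ((lam (n + 1) : ℝ) : ℂ) - ((lam n : ℝ) : ℂ) ≠ 0 := by
      rw [← Complex.ofReal_sub]
      exact Complex.ofReal_ne_zero.mpr (hne n)
    push_cast
    field_simp
    ring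
  -- a.e. identification of G on pieces
  have hGae : ∀ n : ℤ, ∀ x : ℝ, x ≤ lam (n + 1) →
      G =ᵐ[volume.restrict (Set.Ioc (lam n) x)] fun _ => dd1 lam f n := by
    intro n x hx
    rw [Filter.EventuallyEq, ae_restrict_iff' measurableSet_Ioc, ae_iff]
    refine measure_mono_null (t := {lam (n + 1)}) (fun t ht => ?_) Real.volume_singleton
    simp only [Set.mem_setOf_eq, _root_.not_imp, Set.mem_Ioc] at ht
    obtain ⟨⟨ht1, ht2⟩, hne'⟩ := ht
    show t ∈ ({lam (n + 1)} : Set ℝ)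
    rw [Set.mem_singleton_iff]
    by_contra hcon
    exact hne' (hG n t ht1 (lt_of_le_of_ne (le_trans ht2 hx) hcon))
  -- integral of G over pieces
  have hint_piece : ∀ n : ℤ, ∀ x : ℝ, lam n ≤ x → x ≤ lam (n + 1) →
      ∫ t in (lam n)..x, G t = ((x - lam n : ℝ) : ℂ) * dd1 lam f n := by
    intro n x h1 h2
    rw [intervalIntegral.integral_of_le h1, integral_congr_ae (hGae n x h2),
      setIntegral_const, Real.volume_real_Ioc_of_le h1,
      Complex.real_smul]
  -- integrability of G
  have hG_int_Ioc : ∀ n : ℤ, IntegrableOn G (Set.Ioc (lam n) (lam (n + 1))) := by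
    intro n
    have hsym : (fun _ : ℝ => dd1 lam f n) =ᵐ[volume.restrict (Set.Ioc (lam n) (lam (n + 1)))] G :=
      (hGae n (lam (n + 1)) le_rfl).symm
    exact Integrable.congr (integrableOn_const measure_Ioc_lt_top.ne) hsym
  have hG_int_Icc : ∀ m : ℤ, ∀ k : ℕ, IntegrableOn G (Set.Icc (lam m) (lam (m + k))) := by
    intro m k
    induction k with
    | zero =>
      have hz : volume (Set.Icc (lam m) (lam (m + (0:ℕ)))) = 0 := by
        norm_num [Set.Icc_self]
      rw [IntegrableOn, Measure.restrict_eq_zero.mpr hz]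
      exact integrable_zero_measure
    | succ k ih =>
      have h1 : IntegrableOn G (Set.Icc (lam m) (lam ((m + k) + 1))) := by
        rw [← Set.Icc_union_Ioc_eq_Icc (hmono.monotone (by omega : m ≤ m + (k:ℤ)))
          (hlt (m + k)).le]
        exact ih.union (hG_int_Ioc (m + k))
      have : (m + ((k:ℕ)+1:ℕ) : ℤ) = (m + k) + 1 := by push_cast; ring
      rw [this]
      exact h1
  have hGloc : LocallyIntegrable G volume := by
    rw [MeasureTheory.locallyIntegrable_iff]
    intro k hk
    obtain ⟨r, hr⟩ := hk.isBounded.subset_closedBall 0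
    obtain ⟨M0, hM0⟩ := (hg.2.2.eventually_ge_atTop r).exists
    obtain ⟨m0, hm0⟩ := (hg.2.1.eventually_le_atBot (-r)).exists
    set M : ℤ := max M0 m0 with hM
    obtain ⟨kk, hkk⟩ := Int.le.dest (le_max_right M0 m0 : m0 ≤ M)
    refine (hG_int_Icc m0 kk).mono_set ?_
    rw [hkk]
    intro x hx
    have hx2 := hr hx
    rw [Real.closedBall_eq_Icc] at hx2
    constructor
    · have : (0:ℝ) - r ≤ x := hx2.1
      linarith [hm0]
    · have hx3 : x ≤ 0 + r := hx2.2
      have : lam M0 ≤ lam M := hmono.monotone (le_max_left _ _)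
      linarith [hM0]
  have hIntG : ∀ a b : ℝ, IntervalIntegrable G volume a b := by
    intro a b
    rw [intervalIntegrable_iff]
    exact (hGloc.integrableOn_isCompact isCompact_uIcc).mono_set Set.uIoc_subset_uIcc
  -- grid values and FTC
  have hFgrid : ∀ n : ℤ, F (lam n) = f n := by
    intro n
    rw [hFval n (lam n) le_rfl (hlt n).le]
    simp
  have hpiece : ∀ n : ℤ, ∀ x : ℝ, lam n ≤ x → x ≤ lam (n + 1) →
      F x - F (lam n) = ∫ t in (lam n)..x, G t := by
    intro n x h1 h2
    rw [hFval n x h1 h2, hFgrid n, hint_piece n x h1 h2]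
    ring
  have hgrid2 : ∀ m : ℤ, ∀ k : ℕ,
      F (lam (m + k)) - F (lam m) = ∫ t in (lam m)..(lam (m + k)), G t := by
    intro m k
    induction k with
    | zero => norm_num
    | succ k ih =>
      have hcast : (m + ((k:ℕ)+1:ℕ) : ℤ) = (m + k) + 1 := by push_cast; ring
      rw [hcast, ← intervalIntegral.integral_add_adjacent_intervals
        (hIntG (lam m) (lam (m + k))) (hIntG (lam (m + k)) (lam (m + k + 1))), ← ih,
        ← hpiece (m + k) (lam (m + k + 1)) (hlt _).le le_rfl]
      ring
  have hFTC : ∀ a b : ℝ, a ≤ b → F b - F a = ∫ t in a..b, G t := by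
    intro a b hab
    obtain ⟨n, hn1, hn2⟩ := locate6 hg a
    rcases le_or_gt b (lam (n + 1)) with hble | hbgt
    · rw [← intervalIntegral.integral_interval_sub_left (hIntG (lam n) b) (hIntG (lam n) a),
        ← hpiece n b (by linarith) hble, ← hpiece n a hn1.le hn2]
      ring
    · obtain ⟨m, hm1, hm2⟩ := locate6 hg b
      have hnm : n + 1 ≤ m := by
        by_contra hcon
        push_neg at hcon
        have : lam (m + 1) ≤ lam (n + 1) := hmono.monotone (by omega)
        linarith
      obtain ⟨kk, hkk⟩ := Int.le.dest hnm
      have e1 : F b - F (lam m) = ∫ t in (lam m)..b, G t := hpiece m b hm1.le hm2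
      have e2 : F (lam m) - F (lam (n + 1)) = ∫ t in (lam (n + 1))..(lam m), G t := by
        rw [← hkk]
        exact hgrid2 (n + 1) kk
      have e3 : F (lam (n + 1)) - F a = ∫ t in a..(lam (n + 1)), G t := by
        rw [← intervalIntegral.integral_interval_sub_left (hIntG (lam n) (lam (n + 1)))
          (hIntG (lam n) a), ← hpiece n (lam (n + 1)) (hlt n).le le_rfl,
          ← hpiece n a hn1.le hn2]
        ring
      have hsum : F b - F a = (∫ t in a..(lam (n + 1)), G t) +
          (∫ t in (lam (n + 1))..(lam m), G t) + (∫ t in (lam m)..b, G t) := by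
        rw [← e1, ← e2, ← e3]
        ring
      rw [hsum, intervalIntegral.integral_add_adjacent_intervals (hIntG _ _) (hIntG _ _),
        intervalIntegral.integral_add_adjacent_intervals (hIntG _ _) (hIntG _ _)]
  have hFcont : Continuous F := by
    have hFeq : ∀ x : ℝ, F (lam 0) + (∫ t in (lam 0)..x, G t) = F x := by
      intro x
      rcases le_total (lam 0) x with h | h
      · rw [← hFTC (lam 0) x h]; ring
      · rw [intervalIntegral.integral_symm, ← hFTC x (lam 0) h]; ring
    exact (continuous_const.add (intervalIntegral.continuous_primitive hIntG (lam 0))).congr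
      hFeq
  have hadmFG : AdmissibleExt 1 lam f F G := by
    refine ⟨?_, hGloc, ?_, hFgrid⟩
    · have h0 : ((1:ℕ) - 1 : ℕ) = 0 := rfl
      rw [h0]
      exact_mod_cast contDiff_zero.mpr hFcont
    · intro a b hab
      simpa [iteratedDeriv_zero] using hFTC a b hab
  refine ⟨hadmFG, ?_⟩
  have hconv : ∀ H : ℝ → ℂ,
      (∫⁻ t, ENNReal.ofReal (‖H t‖ ^ p)) = ∫⁻ t, (‖H t‖₊ : ℝ≥0∞) ^ p := by
    intro H
    refine lintegral_congr fun t => ?_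
    rw [← ENNReal.ofReal_coe_nnreal, coe_nnnorm,
      ← ENNReal.ofReal_rpow_of_nonneg (norm_nonneg _) hp0.le]
  set CC : ℝ≥0∞ := ENNReal.ofReal (4 * K + 5) with hCC
  have hCC0 : CC ≠ 0 := by
    rw [hCC, Ne, ENNReal.ofReal_eq_zero]
    push_neg
    linarith
  have main : ∀ F' G' : ℝ → ℂ, AdmissibleExt 1 lam f F' G' →
      ((∫⁻ t, ENNReal.ofReal (‖F t‖ ^ p)) +
          ∫⁻ t, ENNReal.ofReal (‖G t‖ ^ p)) ^ (1 / p) ≤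
        CC * (((∫⁻ t, ENNReal.ofReal (‖F' t‖ ^ p)) +
          ∫⁻ t, ENNReal.ofReal (‖G' t‖ ^ p)) ^ (1 / p)) := by
    intro F' G' hadm
    obtain ⟨hF'cd, hG'loc, hFTC'0, hF'grid⟩ := hadm
    have hF'cont : Continuous F' := by
      have h0 : ((1:ℕ) - 1 : ℕ) = 0 := rfl
      rw [h0] at hF'cd
      exact contDiff_zero.mp (by exact_mod_cast hF'cd)
    have hFTC' : ∀ a b : ℝ, a ≤ b → F' b - F' a = ∫ t in a..b, G' t := by
      intro a b hab
      simpa [iteratedDeriv_zero] using hFTC'0 a b hab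
    set h' : ℤ → ℝ≥0∞ := fun n => ENNReal.ofReal (lam (n + 1) - lam n) with hh'
    have hvol : ∀ n : ℤ, volume (Set.Ioc (lam n) (lam (n + 1))) = h' n :=
      fun n => Real.volume_Ioc
    have hh0 : ∀ n, h' n ≠ 0 := by
      intro n
      simp only [hh', Ne, ENNReal.ofReal_eq_zero, not_le]
      linarith [hlt n]
    have hhtop : ∀ n, h' n ≠ ⊤ := fun n => ENNReal.ofReal_ne_top
    have hhK : ∀ n, h' n ≤ ENNReal.ofReal K := fun n => ENNReal.ofReal_le_ofReal (hKb n)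
    set PF : ℤ → ℝ≥0∞ :=
      fun n => ∫⁻ t in Set.Ioc (lam n) (lam (n + 1)), (‖F' t‖₊ : ℝ≥0∞) ^ p with hPF
    set PG : ℤ → ℝ≥0∞ :=
      fun n => ∫⁻ t in Set.Ioc (lam n) (lam (n + 1)), (‖G' t‖₊ : ℝ≥0∞) ^ p with hPG
    set JF : ℤ → ℝ≥0∞ :=
      fun n => ∫⁻ t in Set.Ioc (lam n) (lam (n + 1)), (‖F' t‖₊ : ℝ≥0∞) with hJF
    set JG : ℤ → ℝ≥0∞ :=
      fun n => ∫⁻ t in Set.Ioc (lam n) (lam (n + 1)), (‖G' t‖₊ : ℝ≥0∞) with hJG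
    have hmG' : ∀ n : ℤ, AEMeasurable (fun t => (‖G' t‖₊ : ℝ≥0∞))
        (volume.restrict (Set.Ioc (lam n) (lam (n + 1)))) :=
      fun n => hG'loc.aestronglyMeasurable.enorm.restrict
    have hmF' : ∀ n : ℤ, AEMeasurable (fun t => (‖F' t‖₊ : ℝ≥0∞))
        (volume.restrict (Set.Ioc (lam n) (lam (n + 1)))) :=
      fun n => (hF'cont.measurable.nnnorm.coe_nnreal_ennreal).aemeasurable.restrict
    have hHoldG : ∀ n : ℤ, JG n ≤ (PG n) ^ (1/p) * (h' n) ^ (1 - 1/p) := by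
      intro n
      have h := holder6 (fun t => (‖G' t‖₊ : ℝ≥0∞)) (hmG' n) hp
      rwa [hvol n] at h
    have hHoldF : ∀ n : ℤ, JF n ≤ (PF n) ^ (1/p) * (h' n) ^ (1 - 1/p) := by
      intro n
      have h := holder6 (fun t => (‖F' t‖₊ : ℝ≥0∞)) (hmF' n) hp
      rwa [hvol n] at h
    have hnormint : ∀ a b : ℝ, a ≤ b →
        (‖∫ t in a..b, G' t‖₊ : ℝ≥0∞) ≤ ∫⁻ t in Set.Ioc a b, (‖G' t‖₊ : ℝ≥0∞) := by
      intro a b hab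
      rw [intervalIntegral.integral_of_le hab]
      exact enorm_integral_le_lintegral_enorm _
    have hBn : ∀ n : ℤ,
        (∫⁻ t in Set.Ioc (lam n) (lam (n + 1)), (‖G t‖₊ : ℝ≥0∞) ^ p) ≤ PG n := by
      intro n
      have hae : (fun t => (‖G t‖₊ : ℝ≥0∞) ^ p)
          =ᵐ[volume.restrict (Set.Ioc (lam n) (lam (n + 1)))]
          (fun _ => (‖dd1 lam f n‖₊ : ℝ≥0∞) ^ p) := by
        filter_upwards [hGae n (lam (n + 1)) le_rfl] with t ht
        rw [ht]
      have e1 : (∫⁻ t in Set.Ioc (lam n) (lam (n + 1)), (‖G t‖₊ : ℝ≥0∞) ^ p)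
          = (‖dd1 lam f n‖₊ : ℝ≥0∞) ^ p * h' n := by
        rw [lintegral_congr_ae hae, lintegral_const, Measure.restrict_apply_univ, hvol n]
      have hXh : (‖dd1 lam f n‖₊ : ℝ≥0∞) * h' n = (‖f (n + 1) - f n‖₊ : ℝ≥0∞) := by
        have hd : dd1 lam f n * ((lam (n + 1) - lam n : ℝ) : ℂ) = f (n + 1) - f n := by
          have h0 : ((lam (n + 1) - lam n : ℝ) : ℂ) ≠ 0 := Complex.ofReal_ne_zero.mpr (hne n)
          rw [dd1, div_mul_cancel₀ _ h0]
        calc (‖dd1 lam f n‖₊ : ℝ≥0∞) * h' n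
            = (‖dd1 lam f n‖₊ : ℝ≥0∞) * (‖((lam (n + 1) - lam n : ℝ) : ℂ)‖₊ : ℝ≥0∞) := by
              simp only [hh']
              congr 1
              rw [Complex.nnnorm_real]; exact (Real.enorm_eq_ofReal (by linarith [hlt n])).symm
          _ = (‖dd1 lam f n * ((lam (n + 1) - lam n : ℝ) : ℂ)‖₊ : ℝ≥0∞) := by
              rw [← ENNReal.coe_mul, ← nnnorm_mul]
          _ = _ := by rw [hd]
      have hXZ : (‖dd1 lam f n‖₊ : ℝ≥0∞) * h' n ≤ ((PG n) ^ (1/p)) * (h' n) ^ (1 - 1/p) := by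
        rw [hXh]
        calc (‖f (n + 1) - f n‖₊ : ℝ≥0∞)
            = (‖∫ t in (lam n)..(lam (n + 1)), G' t‖₊ : ℝ≥0∞) := by
              rw [← hFTC' (lam n) (lam (n + 1)) (hlt n).le, hF'grid, hF'grid]
          _ ≤ JG n := hnormint _ _ (hlt n).le
          _ ≤ _ := hHoldG n
      have hstep := step6 (hh0 n) (hhtop n) hp hXZ
      rw [e1, mul_comm]
      calc h' n * (‖dd1 lam f n‖₊ : ℝ≥0∞) ^ p ≤ ((PG n) ^ (1/p)) ^ p := hstep
        _ = PG n := by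
            rw [← ENNReal.rpow_mul, one_div, inv_mul_cancel₀ hp0.ne', ENNReal.rpow_one]
    have hfn : ∀ n : ℤ, ∀ t ∈ Set.Ioc (lam n) (lam (n + 1)),
        (‖f n‖₊ : ℝ≥0∞) + (‖f (n + 1)‖₊ : ℝ≥0∞) ≤ 2 * (‖F' t‖₊ : ℝ≥0∞) + 2 * JG n := by
      intro n t ht
      have ht1 : lam n ≤ t := ht.1.le
      have ht2 : t ≤ lam (n + 1) := ht.2
      have e1 : f n = F' t - ∫ s in (lam n)..t, G' s := by
        rw [← hF'grid n]
        have h := hFTC' (lam n) t ht1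
        linear_combination -h
      have e2 : f (n + 1) = F' t + ∫ s in t..(lam (n + 1)), G' s := by
        rw [← hF'grid (n + 1)]
        have h := hFTC' t (lam (n + 1)) ht2
        linear_combination h
      have b1 : (‖f n‖₊ : ℝ≥0∞) ≤ (‖F' t‖₊ : ℝ≥0∞) + JG n := by
        rw [e1]
        calc (‖F' t - ∫ s in (lam n)..t, G' s‖₊ : ℝ≥0∞)
            ≤ (‖F' t‖₊ : ℝ≥0∞) + (‖∫ s in (lam n)..t, G' s‖₊ : ℝ≥0∞) := by
              exact_mod_cast ENNReal.coe_le_coe.mpr (nnnorm_sub_le _ _)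
          _ ≤ (‖F' t‖₊ : ℝ≥0∞) + JG n := by
              refine add_le_add_right ?_ _
              exact (hnormint _ _ ht1).trans (lintegral_mono_set (Set.Ioc_subset_Ioc_right ht2))
      have b2 : (‖f (n + 1)‖₊ : ℝ≥0∞) ≤ (‖F' t‖₊ : ℝ≥0∞) + JG n := by
        rw [e2]
        calc (‖F' t + ∫ s in t..(lam (n + 1)), G' s‖₊ : ℝ≥0∞)
            ≤ (‖F' t‖₊ : ℝ≥0∞) + (‖∫ s in t..(lam (n + 1)), G' s‖₊ : ℝ≥0∞) := by
              exact_mod_cast ENNReal.coe_le_coe.mpr (nnnorm_add_le _ _)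
          _ ≤ (‖F' t‖₊ : ℝ≥0∞) + JG n := by
              refine add_le_add_right ?_ _
              exact (hnormint _ _ ht2).trans (lintegral_mono_set (Set.Ioc_subset_Ioc_left ht1))
      calc (‖f n‖₊ : ℝ≥0∞) + (‖f (n + 1)‖₊ : ℝ≥0∞)
          ≤ ((‖F' t‖₊ : ℝ≥0∞) + JG n) + ((‖F' t‖₊ : ℝ≥0∞) + JG n) := add_le_add b1 b2
        _ = 2 * (‖F' t‖₊ : ℝ≥0∞) + 2 * JG n := by ring
    have hFle : ∀ n : ℤ, ∀ x ∈ Set.Ioc (lam n) (lam (n + 1)),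
        (‖F x‖₊ : ℝ≥0∞) ≤ (‖f n‖₊ : ℝ≥0∞) + (‖f (n + 1)‖₊ : ℝ≥0∞) := by
      intro n x hx
      have hx1 : lam n ≤ x := hx.1.le
      have hx2 : x ≤ lam (n + 1) := hx.2
      have hreal : ‖F x‖ ≤ ‖f n‖ + ‖f (n + 1)‖ := by
        rw [hF n x hx1 hx2, phi1P]
        have hhp : 0 < lam (n + 1) - lam n := by linarith [hlt n]
        have hc1 : |(lam (n + 1) - x) / (lam (n + 1) - lam n)| ≤ 1 := by
          rw [abs_div, abs_of_nonneg (by linarith : (0:ℝ) ≤ lam (n + 1) - x),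
            abs_of_pos hhp, div_le_one hhp]
          linarith
        have hc2 : |(x - lam n) / (lam (n + 1) - lam n)| ≤ 1 := by
          rw [abs_div, abs_of_nonneg (by linarith : (0:ℝ) ≤ x - lam n),
            abs_of_pos hhp, div_le_one hhp]
          linarith
        calc ‖f n * (((lam (n + 1) - x) / (lam (n + 1) - lam n) : ℝ) : ℂ) +
              f (n + 1) * (((x - lam n) / (lam (n + 1) - lam n) : ℝ) : ℂ)‖
            ≤ ‖f n‖ * |(lam (n + 1) - x) / (lam (n + 1) - lam n)| +
              ‖f (n + 1)‖ * |(x - lam n) / (lam (n + 1) - lam n)| := by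
              refine (norm_add_le _ _).trans ?_
              rw [norm_mul, norm_mul, Complex.norm_real, Complex.norm_real,
                Real.norm_eq_abs, Real.norm_eq_abs]
          _ ≤ ‖f n‖ * 1 + ‖f (n + 1)‖ * 1 := by
              exact add_le_add (mul_le_mul_of_nonneg_left hc1 (norm_nonneg _))
                (mul_le_mul_of_nonneg_left hc2 (norm_nonneg _))
          _ = ‖f n‖ + ‖f (n + 1)‖ := by ring
      have h := ENNReal.ofReal_le_ofReal hreal
      rw [ENNReal.ofReal_add (norm_nonneg _) (norm_nonneg _)] at h
      simpa only [← coe_nnnorm, ENNReal.ofReal_coe_nnreal] using h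
    have hAn : ∀ n : ℤ, (∫⁻ t in Set.Ioc (lam n) (lam (n + 1)), (‖F t‖₊ : ℝ≥0∞) ^ p) ≤
        (4:ℝ≥0∞) ^ p * PF n + ((4:ℝ≥0∞) ^ p * (ENNReal.ofReal K) ^ p) * PG n := by
      intro n
      set D : ℝ≥0∞ := (‖f n‖₊ : ℝ≥0∞) + (‖f (n + 1)‖₊ : ℝ≥0∞) with hD
      have step1 : (∫⁻ t in Set.Ioc (lam n) (lam (n + 1)), (‖F t‖₊ : ℝ≥0∞) ^ p)
          ≤ D ^ p * h' n := by
        calc (∫⁻ t in Set.Ioc (lam n) (lam (n + 1)), (‖F t‖₊ : ℝ≥0∞) ^ p)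
            ≤ ∫⁻ _ in Set.Ioc (lam n) (lam (n + 1)), D ^ p := by
              refine lintegral_mono_ae ?_
              filter_upwards [ae_restrict_mem measurableSet_Ioc] with t ht
              exact ENNReal.rpow_le_rpow (hFle n t ht) hp0.le
          _ = D ^ p * h' n := by rw [lintegral_const, Measure.restrict_apply_univ, hvol n]
      have step2 : D * h' n ≤
          (2 * ((PF n) ^ (1/p) + (PG n) ^ (1/p) * h' n)) * (h' n) ^ (1 - 1/p) := by
        calc D * h' n = ∫⁻ _ in Set.Ioc (lam n) (lam (n + 1)), D := by
              rw [lintegral_const, Measure.restrict_apply_univ, hvol n]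
          _ ≤ ∫⁻ t in Set.Ioc (lam n) (lam (n + 1)),
              (2 * (‖F' t‖₊ : ℝ≥0∞) + 2 * JG n) := by
              refine lintegral_mono_ae ?_
              filter_upwards [ae_restrict_mem measurableSet_Ioc] with t ht
              exact hfn n t ht
          _ = 2 * JF n + 2 * JG n * h' n := by
              rw [lintegral_add_right _ measurable_const,
                lintegral_const_mul _ (hF'cont.measurable.nnnorm.coe_nnreal_ennreal),
                lintegral_const, Measure.restrict_apply_univ, hvol n]
          _ ≤ 2 * ((PF n) ^ (1/p) * (h' n) ^ (1 - 1/p)) +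
              2 * ((PG n) ^ (1/p) * (h' n) ^ (1 - 1/p)) * h' n := by
              gcongr
              · exact hHoldF n
              · exact hHoldG n
          _ = (2 * ((PF n) ^ (1/p) + (PG n) ^ (1/p) * h' n)) * (h' n) ^ (1 - 1/p) := by
              ring
      have step3 := step6 (hh0 n) (hhtop n) hp step2
      have hZ : (2 * ((PF n) ^ (1/p) + (PG n) ^ (1/p) * h' n)) ^ p ≤
          (4:ℝ≥0∞) ^ p * PF n + ((4:ℝ≥0∞) ^ p * (ENNReal.ofReal K) ^ p) * PG n := by
        have e4 : ((2:ℝ≥0∞) * ((PF n) ^ (1/p) + (PG n) ^ (1/p) * h' n)) ^ p =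
            (2:ℝ≥0∞) ^ p * ((PF n) ^ (1/p) + (PG n) ^ (1/p) * h' n) ^ p :=
          ENNReal.mul_rpow_of_nonneg _ _ hp0.le
        have e5 : ((PF n) ^ (1/p) + (PG n) ^ (1/p) * h' n) ^ p ≤
            (2:ℝ≥0∞) ^ (p - 1) * (((PF n) ^ (1/p)) ^ p + ((PG n) ^ (1/p) * h' n) ^ p) :=
          ENNReal.rpow_add_le_mul_rpow_add_rpow _ _ hp
        have e6 : ((PF n) ^ (1/p)) ^ p = PF n := by
          rw [← ENNReal.rpow_mul, one_div, inv_mul_cancel₀ hp0.ne', ENNReal.rpow_one]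
        have e7 : ((PG n) ^ (1/p) * h' n) ^ p ≤ PG n * (ENNReal.ofReal K) ^ p := by
          rw [ENNReal.mul_rpow_of_nonneg _ _ hp0.le, ← ENNReal.rpow_mul, one_div,
            inv_mul_cancel₀ hp0.ne', ENNReal.rpow_one]
          exact mul_le_mul_right (ENNReal.rpow_le_rpow (hhK n) hp0.le) _
        calc ((2:ℝ≥0∞) * ((PF n) ^ (1/p) + (PG n) ^ (1/p) * h' n)) ^ p
            ≤ (2:ℝ≥0∞) ^ p * ((2:ℝ≥0∞) ^ (p - 1) *
              (PF n + PG n * (ENNReal.ofReal K) ^ p)) := by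
              rw [e4]
              refine mul_le_mul_right (e5.trans ?_) _
              refine mul_le_mul_right ?_ _
              rw [e6]
              exact add_le_add_right e7 _
          _ ≤ (2:ℝ≥0∞) ^ p * ((2:ℝ≥0∞) ^ p * (PF n + PG n * (ENNReal.ofReal K) ^ p)) := by
              refine mul_le_mul_right (mul_le_mul_left ?_ _) _
              exact ENNReal.rpow_le_rpow_of_exponent_le (by norm_num) (by linarith)
          _ = (4:ℝ≥0∞) ^ p * PF n + ((4:ℝ≥0∞) ^ p * (ENNReal.ofReal K) ^ p) * PG n := by
              rw [← mul_assoc, ← ENNReal.mul_rpow_of_nonneg _ _ hp0.le]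
              norm_num
              ring
      calc (∫⁻ t in Set.Ioc (lam n) (lam (n + 1)), (‖F t‖₊ : ℝ≥0∞) ^ p)
          ≤ D ^ p * h' n := step1
        _ ≤ _ := by
            rw [mul_comm]
            exact step3.trans hZ
    rw [hconv F, hconv G, hconv F', hconv G',
      partition6 hg (fun t => (‖F t‖₊ : ℝ≥0∞) ^ p),
      partition6 hg (fun t => (‖G t‖₊ : ℝ≥0∞) ^ p),
      partition6 hg (fun t => (‖F' t‖₊ : ℝ≥0∞) ^ p),
      partition6 hg (fun t => (‖G' t‖₊ : ℝ≥0∞) ^ p)]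
    have hB : (∑' n : ℤ, ∫⁻ t in Set.Ioc (lam n) (lam (n + 1)), (‖G t‖₊ : ℝ≥0∞) ^ p) ≤
        ∑' n : ℤ, PG n := ENNReal.tsum_le_tsum hBn
    have hA : (∑' n : ℤ, ∫⁻ t in Set.Ioc (lam n) (lam (n + 1)), (‖F t‖₊ : ℝ≥0∞) ^ p) ≤
        (4:ℝ≥0∞) ^ p * (∑' n : ℤ, PF n) +
          ((4:ℝ≥0∞) ^ p * (ENNReal.ofReal K) ^ p) * (∑' n : ℤ, PG n) := by
      calc (∑' n : ℤ, ∫⁻ t in Set.Ioc (lam n) (lam (n + 1)), (‖F t‖₊ : ℝ≥0∞) ^ p)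
          ≤ ∑' n : ℤ, ((4:ℝ≥0∞) ^ p * PF n +
            ((4:ℝ≥0∞) ^ p * (ENNReal.ofReal K) ^ p) * PG n) := ENNReal.tsum_le_tsum hAn
        _ = _ := by rw [ENNReal.tsum_add, ENNReal.tsum_mul_left, ENNReal.tsum_mul_left]
    have h4CC : (4:ℝ≥0∞) ^ p ≤ CC ^ p := by
      refine ENNReal.rpow_le_rpow ?_ hp0.le
      rw [hCC, show (4:ℝ≥0∞) = ENNReal.ofReal 4 by norm_num]
      exact ENNReal.ofReal_le_ofReal (by linarith)
    have hKCC : (4:ℝ≥0∞) ^ p * (ENNReal.ofReal K) ^ p + 1 ≤ CC ^ p := by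
      have e1 : (4:ℝ≥0∞) ^ p * (ENNReal.ofReal K) ^ p = (ENNReal.ofReal (4 * K)) ^ p := by
        rw [← ENNReal.mul_rpow_of_nonneg _ _ hp0.le,
          show (4:ℝ≥0∞) = ENNReal.ofReal 4 by norm_num,
          ← ENNReal.ofReal_mul (by norm_num)]
      have e2 : (1:ℝ≥0∞) = (1:ℝ≥0∞) ^ p := (ENNReal.one_rpow p).symm
      calc (4:ℝ≥0∞) ^ p * (ENNReal.ofReal K) ^ p + 1
          = (ENNReal.ofReal (4 * K)) ^ p + (1:ℝ≥0∞) ^ p := by rw [e1, ← e2]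
        _ ≤ (ENNReal.ofReal (4 * K) + 1) ^ p := ENNReal.add_rpow_le_rpow_add _ _ hp
        _ ≤ CC ^ p := by
            refine ENNReal.rpow_le_rpow ?_ hp0.le
            rw [hCC, show (1:ℝ≥0∞) = ENNReal.ofReal 1 by norm_num,
              ← ENNReal.ofReal_add (by linarith) (by norm_num)]
            exact ENNReal.ofReal_le_ofReal (by linarith)
    have htot : (∑' n : ℤ, ∫⁻ t in Set.Ioc (lam n) (lam (n + 1)), (‖F t‖₊ : ℝ≥0∞) ^ p) +
        (∑' n : ℤ, ∫⁻ t in Set.Ioc (lam n) (lam (n + 1)), (‖G t‖₊ : ℝ≥0∞) ^ p) ≤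
        CC ^ p * ((∑' n : ℤ, PF n) + (∑' n : ℤ, PG n)) := by
      calc (∑' n : ℤ, ∫⁻ t in Set.Ioc (lam n) (lam (n + 1)), (‖F t‖₊ : ℝ≥0∞) ^ p) +
          (∑' n : ℤ, ∫⁻ t in Set.Ioc (lam n) (lam (n + 1)), (‖G t‖₊ : ℝ≥0∞) ^ p)
          ≤ ((4:ℝ≥0∞) ^ p * (∑' n : ℤ, PF n) +
            ((4:ℝ≥0∞) ^ p * (ENNReal.ofReal K) ^ p) * (∑' n : ℤ, PG n)) +
            (∑' n : ℤ, PG n) := add_le_add hA hB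
        _ = (4:ℝ≥0∞) ^ p * (∑' n : ℤ, PF n) +
            ((4:ℝ≥0∞) ^ p * (ENNReal.ofReal K) ^ p + 1) * (∑' n : ℤ, PG n) := by ring
        _ ≤ CC ^ p * (∑' n : ℤ, PF n) + CC ^ p * (∑' n : ℤ, PG n) :=
            add_le_add (mul_le_mul_left h4CC _) (mul_le_mul_left hKCC _)
        _ = CC ^ p * ((∑' n : ℤ, PF n) + (∑' n : ℤ, PG n)) := by ring
    have hfinal := ENNReal.rpow_le_rpow htot (by positivity : (0:ℝ) ≤ 1 / p)
    rwa [ENNReal.mul_rpow_of_nonneg _ _ (by positivity : (0:ℝ) ≤ 1 / p),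
      ← ENNReal.rpow_mul, mul_one_div, div_self hp0.ne', ENNReal.rpow_one] at hfinal
  rw [traceW]
  rw [ENNReal.mul_iInf_of_ne hCC0 ENNReal.ofReal_ne_top]
  refine le_iInf fun F' => ?_
  rw [ENNReal.mul_iInf_of_ne hCC0 ENNReal.ofReal_ne_top]
  refine le_iInf fun G' => ?_
  rw [ENNReal.mul_iInf_of_ne hCC0 ENNReal.ofReal_ne_top]
  refine le_iInf fun hadm => ?_
  exact main F' G' hadm
end
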